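/- arXiv:chao-dyn/9305008 — 6 statements merged into one kernel-verified Lean document; each statement's English description precedes it below -/
import Mathlib

section
/- Every continuous map τ : A^ℤ → A^ℤ commuting with the shift σ (a cellular automaton) admits a local rule: there exist R ∈ ℕ and f : A^{2R+1} → A such that (τ(s))_i = f(s_{i−R},…,s_{i+R}) for all s ∈ A^ℤ and i ∈ ℤ. Conversely, every map defined by such a local rule is continuous and commutes with σ. -/
/-- The (right) shift map on bi-infinite sequences: `(σ s)_i = s_{i+1}`. -/
def shft {α : Type} : (ℤ → α) → (ℤ → α) := fun s i => s (i + 1)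

/-- Curtis–Hedlund–Lyndon: a map `τ : A^ℤ → A^ℤ` is continuous and
commutes with the shift iff it admits a local rule `f : A^{2R+1} → A` with
`(τ s)_i = f(s_{i−R},…,s_{i+R})`. -/
theorem stmt_2 (A : Type) [Fintype A] [TopologicalSpace A] [DiscreteTopology A]
    (τ : (ℤ → A) → (ℤ → A)) :
    (Continuous τ ∧ τ ∘ shft = shft ∘ τ) ↔
    ∃ (R : ℕ) (f : (Fin (2 * R + 1) → A) → A),
      ∀ (s : ℤ → A) (i : ℤ),
        τ s i = f (fun j => s (i - (R : ℤ) + ((j : ℕ) : ℤ))) := by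
  constructor
  · rintro ⟨hc, hcomm⟩
    -- τ commutes with all powers of the shift
    have hsh : ∀ (i : ℤ) (s : ℤ → A) (j : ℤ),
        τ (fun k => s (k + i)) j = τ s (j + i) := by
      intro i
      induction i using Int.induction_on with
      | zero => intro s j; simp
      | succ n ih =>
        intro s j
        have h1 : (fun k : ℤ => s (k + ((n : ℤ) + 1))) = shft (fun k => s (k + n)) := by
          funext k; simp only [shft]; ring_nf
        rw [h1,
          show τ (shft (fun k => s (k + (n : ℤ)))) = shft (τ (fun k => s (k + (n : ℤ)))) from
            congrFun hcomm _]
        simp only [shft]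
        rw [ih]
        ring_nf
      | pred n ih =>
        intro s j
        have h1 : shft (fun k : ℤ => s (k + (-(n : ℤ) - 1))) = fun k => s (k + (-(n : ℤ))) := by
          funext k; simp only [shft]; ring_nf
        have h2 := congrFun (congrFun hcomm (fun k : ℤ => s (k + (-(n : ℤ) - 1)))) (j - 1)
        simp only [Function.comp] at h2
        rw [h1, ih] at h2
        simp only [shft] at h2
        have h3 : j - 1 + 1 = j := by ring
        rw [h3] at h2
        have h4 : j - 1 + -(n : ℤ) = j + (-(n : ℤ) - 1) := by ring
        rw [h4] at h2
        exact h2.symm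
    -- continuity of the 0-coordinate of τ
    have hg : Continuous fun s : ℤ → A => τ s 0 := (continuous_apply (0 : ℤ)).comp hc
    -- local rule window via compactness
    have key : ∃ R : ℕ, ∀ s t : ℤ → A,
        (∀ j : ℤ, j.natAbs ≤ R → s j = t j) → τ s 0 = τ t 0 := by
      have hopen : ∀ s : ℤ → A, ∃ I : Finset ℤ,
          ∀ t : ℤ → A, (∀ a ∈ I, t a = s a) → τ t 0 = τ s 0 := by
        intro s
        have ho : IsOpen ((fun u : ℤ → A => τ u 0) ⁻¹' {τ s 0}) :=
          (isOpen_discrete _).preimage hg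
        rw [isOpen_pi_iff] at ho
        obtain ⟨I, u, hu, hsub⟩ := ho s rfl
        refine ⟨I, fun t ht => ?_⟩
        have hmem : t ∈ (I : Set ℤ).pi u := by
          intro a ha
          rw [ht a ha]
          exact (hu a ha).2
        exact hsub hmem
      choose I hI using hopen
      have hVopen : ∀ s : ℤ → A, IsOpen {t : ℤ → A | ∀ a ∈ I s, t a = s a} := by
        intro s
        have he : {t : ℤ → A | ∀ a ∈ I s, t a = s a}
            = ⋂ a ∈ I s, (fun t : ℤ → A => t a) ⁻¹' {s a} := by
          ext t; simp
        rw [he]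
        exact isOpen_biInter_finset fun a _ =>
          (isOpen_discrete _).preimage (continuous_apply a)
      obtain ⟨T, hT⟩ := isCompact_univ.elim_finite_subcover
        (fun s : ℤ → A => {t : ℤ → A | ∀ a ∈ I s, t a = s a}) hVopen
        (fun t _ => Set.mem_iUnion.2 ⟨t, fun a _ => rfl⟩)
      refine ⟨T.sup (fun s => (I s).sup (fun a => a.natAbs)), fun s t hst => ?_⟩
      obtain ⟨s₀, hs₀T, hs₀⟩ := Set.mem_iUnion₂.1 (hT (Set.mem_univ s))
      have hs₀' : ∀ a ∈ I s₀, s a = s₀ a := hs₀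
      have ht₀ : ∀ a ∈ I s₀, t a = s₀ a := by
        intro a ha
        have hle : a.natAbs ≤ T.sup (fun s => (I s).sup (fun a => a.natAbs)) :=
          le_trans (Finset.le_sup ha)
            (Finset.le_sup (f := fun s => (I s).sup fun a => a.natAbs) hs₀T)
        rw [← hst a hle]
        exact hs₀' a ha
      rw [hI s₀ s hs₀', ← hI s₀ t ht₀]
    obtain ⟨R, hR⟩ := key
    refine ⟨R, fun w => τ (fun k => w ⟨min (2 * R) (k + R).toNat, by omega⟩) 0, ?_⟩
    intro s i
    have h0 : τ (fun k => s (k + i)) 0 = τ s i := by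
      rw [hsh i s 0]; norm_num
    rw [← h0]
    apply hR
    intro j hj
    show s (j + i) = s (i - (R : ℤ) +
      (((⟨min (2 * R) (j + R).toNat, by omega⟩ : Fin (2 * R + 1)) : ℕ) : ℤ))
    have hmin : min (2 * R) (j + R).toNat = (j + R).toNat :=
      Nat.min_eq_right (by omega)
    congr 1
    simp only [hmin]
    omega
  · rintro ⟨R, f, hf⟩
    constructor
    · apply continuous_pi
      intro i
      have he : (fun s : ℤ → A => τ s i)
          = (fun s : ℤ → A => f (fun j => s (i - (R : ℤ) + ((j : ℕ) : ℤ)))) := by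
        funext s; exact hf s i
      rw [he]
      exact continuous_of_discreteTopology.comp
        (continuous_pi fun j => continuous_apply _)
    · funext s i
      have h2 : (τ ∘ shft) s i = f fun j => s (i - (R : ℤ) + ((j : ℕ) : ℤ) + 1) := by
        simp only [Function.comp]
        rw [hf]
        simp only [shft]
      have h3 : (shft ∘ τ) s i = f fun j => s (i + 1 - (R : ℤ) + ((j : ℕ) : ℤ)) := by
        simp only [Function.comp, shft]
        rw [hf]
      rw [h2, h3]
      congr 1
      funext j
      congr 1
      ring
end

section
/- If (T,Q) is an expansive formal multiscattering system, then there exist a finite alphabet A, a subshift Σ ⊆ A^ℤ, and a continuous surjection Φ : Σ → Λ(T,Q) with Φ ∘ σ = T ∘ Φ (i.e., a surjective semi-conjugacy from a symbolic dynamics onto the trapped set). If moreover (T,Q) has a generator consisting of pairwise disjoint sets, Φ can be chosen to be a homeomorphism, and then Λ(T,Q) is totally disconnected. -/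
/-- A formal multiscattering system (FMS), with `I^i = T^i(Q) ∩ Q`. -/
def IsFMS {M : Type} [MetricSpace M] (T : Equiv.Perm M) (Q : Set M) : Prop :=
  IsCompact Q ∧
  ContinuousOn T Q ∧ ContinuousOn T.symm (⇑T '' Q) ∧
  (∀ n : ℕ, (⇑(T ^ ((n : ℤ) + 1)) '' (⇑(T ^ (-(n : ℤ))) '' Q ∩ Q) \ Q).Nonempty) ∧
  (∀ n : ℕ, (⇑(T ^ ((n : ℤ) + 1)) '' (⇑(T ^ (-(n : ℤ))) '' Q ∩ Q) ∩ Q).Nonempty) ∧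
  (∀ x ∈ Q, T x ∉ Q → ∀ n : ℕ, 1 ≤ n → ⇑(T ^ (n : ℤ)) x ∉ Q)

/-- The trapped set `Λ(T,Q) = ⋂_{i∈ℤ} T^i(Q)`. -/
def trapped {M : Type} (T : Equiv.Perm M) (Q : Set M) : Set M :=
  ⋂ i : ℤ, ⇑(T ^ i) '' Q

/-- `T` restricted to the trapped set is expansive. -/
def FMSExpansive {M : Type} [MetricSpace M] (T : Equiv.Perm M) (Q : Set M) : Prop :=
  ∃ δ > (0 : ℝ), ∀ x ∈ trapped T Q, ∀ y ∈ trapped T Q, x ≠ y →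
    ∃ n : ℤ, δ < dist (⇑(T ^ n) x) (⇑(T ^ n) y)

/-- A generator for the FMS. -/
def IsGenerator {M : Type} [MetricSpace M] (T : Equiv.Perm M) (Q : Set M)
    (α : Finset (Set M)) : Prop :=
  (∀ U ∈ α, IsOpen U) ∧ trapped T Q ⊆ ⋃₀ (α : Set (Set M)) ∧
  ∀ f : ℤ → Set M, (∀ i, f i ∈ α) →
    Set.Subsingleton (Q ∩ ⋂ i : ℤ, ⇑(T ^ i) '' closure (f i))

set_option linter.unusedSectionVars false

namespace Stmt8Aux

variable {M : Type} [MetricSpace M] {T : Equiv.Perm M} {Q : Set M}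

lemma mem_trapped_iff {x : M} : x ∈ trapped T Q ↔ ∀ i : ℤ, ⇑(T ^ i) x ∈ Q := by
  simp only [trapped, Set.mem_iInter, Equiv.image_eq_preimage_symm, Set.mem_preimage]
  constructor
  · intro h i
    have := h (-i)
    rwa [show ((T ^ (-i)).symm : M → M) = ⇑(T ^ i) by
      rw [← Equiv.Perm.inv_def, ← zpow_neg, neg_neg]] at this
  · intro h i
    rw [show ((T ^ i).symm : M → M) = ⇑(T ^ (-i)) by
      rw [← Equiv.Perm.inv_def, ← zpow_neg]]
    exact h (-i)

lemma trapped_maps (i : ℤ) {x : M} (hx : x ∈ trapped T Q) : ⇑(T ^ i) x ∈ trapped T Q := by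
  rw [mem_trapped_iff] at hx ⊢
  intro j
  rw [show ⇑(T ^ j) (⇑(T ^ i) x) = ⇑(T ^ (j + i)) x by rw [zpow_add]; rfl]
  exact hx _

lemma trapped_subset : trapped T Q ⊆ Q := by
  intro x hx
  have := mem_trapped_iff.1 hx 0
  simpa using this

lemma trapped_subset_image : trapped T Q ⊆ ⇑T '' Q := by
  intro x hx
  have h1 := mem_trapped_iff.1 hx (-1)
  refine ⟨⇑(T ^ (-1 : ℤ)) x, h1, ?_⟩
  rw [show ⇑T (⇑(T ^ (-1:ℤ)) x) = ⇑(T ^ (1 + -1 : ℤ)) x by rw [zpow_add, zpow_one]; rfl]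
  simp

/-- forward pieces -/
def negSet (T : Equiv.Perm M) (Q : Set M) : ℕ → Set M
  | 0 => Q
  | n+1 => Q ∩ ⇑T '' (negSet T Q n)

def posSet (T : Equiv.Perm M) (Q : Set M) : ℕ → Set M
  | 0 => Q
  | n+1 => ⇑T.symm '' (⇑T '' Q ∩ posSet T Q n)

lemma negSet_mem (n : ℕ) {x : M} : x ∈ negSet T Q n ↔ ∀ k : ℕ, k ≤ n → ⇑(T ^ (-(k:ℤ))) x ∈ Q := by
  induction n generalizing x with
  | zero => simp [negSet, Equiv.Perm.one_symm]
  | succ n ih =>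
    simp only [negSet, Set.mem_inter_iff, Equiv.image_eq_preimage_symm, Set.mem_preimage]
    rw [ih]
    constructor
    · rintro ⟨hQ, hrec⟩ k hk
      match k with
      | 0 => simpa using hQ
      | (m+1) =>
        have := hrec m (by omega)
        rwa [show ⇑(T ^ (-(m:ℤ))) (T.symm x) = ⇑(T ^ (-((m+1:ℕ):ℤ))) x by
          push_cast; rw [show (-((m:ℤ)+1)) = -(m:ℤ) + -1 by ring, zpow_add, zpow_neg_one]
          rfl] at this
    · intro hall
      refine ⟨by simpa using hall 0 (by omega), fun k hk => ?_⟩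
      have := hall (k+1) (by omega)
      rwa [show ⇑(T ^ (-((k+1:ℕ):ℤ))) x = ⇑(T ^ (-(k:ℤ))) (T.symm x) by
        push_cast; rw [show (-((k:ℤ)+1)) = -(k:ℤ) + -1 by ring, zpow_add, zpow_neg_one]
        rfl] at this

lemma posSet_mem (n : ℕ) {x : M} : x ∈ posSet T Q n ↔ ∀ k : ℕ, k ≤ n → ⇑(T ^ (k:ℤ)) x ∈ Q := by
  induction n generalizing x with
  | zero => simp [posSet]
  | succ n ih =>
    simp only [posSet, Equiv.image_eq_preimage_symm, Set.mem_preimage, Set.mem_inter_iff]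
    rw [show (T.symm.symm : M → M) = ⇑T from rfl]
    constructor
    · rintro ⟨hTQ, hrec⟩ k hk
      have hx : x ∈ Q := by simpa using hTQ
      match k with
      | 0 => simpa using hx
      | (m+1) =>
        have := (ih.1 hrec) m (by omega)
        rwa [show ⇑(T ^ (m:ℤ)) (T x) = ⇑(T ^ ((m+1:ℕ):ℤ)) x by
          push_cast; rw [zpow_add_one]; rfl] at this
    · intro hall
      have hx : x ∈ Q := by simpa using hall 0 (by omega)
      refine ⟨by simpa using hx, ih.2 fun k hk => ?_⟩
      have := hall (k+1) (by omega)
      rwa [show ⇑(T ^ ((k+1:ℕ):ℤ)) x = ⇑(T ^ (k:ℤ)) (T x) by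
        push_cast; rw [zpow_add_one]; rfl] at this

lemma negSet_compact (hQ : IsCompact Q) (hT : ContinuousOn T Q) (n : ℕ) :
    IsCompact (negSet T Q n) := by
  induction n with
  | zero => exact hQ
  | succ n ih =>
    have hsub : negSet T Q n ⊆ Q := fun x hx => by
      simpa using (negSet_mem n).1 hx 0 (by omega)
    exact hQ.inter_right ((ih.image_of_continuousOn (hT.mono hsub)).isClosed)

lemma posSet_compact (hQ : IsCompact Q) (hT : ContinuousOn T Q)
    (hTsymm : ContinuousOn T.symm (⇑T '' Q)) (n : ℕ) :
    IsCompact (posSet T Q n) := by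
  induction n with
  | zero => exact hQ
  | succ n ih =>
    have himg : IsCompact (⇑T '' Q) := hQ.image_of_continuousOn hT
    have hint : IsCompact (⇑T '' Q ∩ posSet T Q n) := himg.inter_right ih.isClosed
    exact hint.image_of_continuousOn (hTsymm.mono Set.inter_subset_left)

lemma trapped_eq_iInter : trapped T Q = ⋂ n : ℕ, (negSet T Q n ∩ posSet T Q n) := by
  ext x
  simp only [Set.mem_iInter, Set.mem_inter_iff, negSet_mem, posSet_mem]
  rw [mem_trapped_iff]
  constructor
  · intro h n
    exact ⟨fun k _ => h _, fun k _ => h _⟩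
  · intro h i
    rcases le_or_gt 0 i with hi | hi
    · obtain ⟨k, rfl⟩ := Int.eq_ofNat_of_zero_le hi
      exact (h k).2 k le_rfl
    · obtain ⟨k, rfl⟩ : ∃ k : ℕ, i = -(k:ℤ) := ⟨i.natAbs, by omega⟩
      exact (h k).1 k le_rfl

lemma trapped_isCompact (hQ : IsCompact Q) (hT : ContinuousOn T Q)
    (hTsymm : ContinuousOn T.symm (⇑T '' Q)) : IsCompact (trapped T Q) := by
  have hclosed : IsClosed (trapped T Q) := by
    rw [trapped_eq_iInter]
    exact isClosed_iInter fun n =>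
      ((negSet_compact hQ hT n).inter_right (posSet_compact hQ hT hTsymm n).isClosed).isClosed
  exact hQ.of_isClosed_subset hclosed trapped_subset

lemma trapped_contOn (hT : ContinuousOn T Q)
    (hTsymm : ContinuousOn T.symm (⇑T '' Q)) (i : ℤ) :
    ContinuousOn ⇑(T ^ i) (trapped T Q) := by
  induction i using Int.induction_on with
  | zero => simpa using continuousOn_id
  | succ k ih =>
    have : ⇑(T ^ ((k:ℤ) + 1)) = ⇑T ∘ ⇑(T ^ (k:ℤ)) := by
      funext x; rw [show ((k:ℤ)+1) = 1 + (k:ℤ) by ring, zpow_add, zpow_one]; rfl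
    rw [this]
    exact (hT.mono trapped_subset).comp ih fun x hx => trapped_maps _ hx
  | pred k ih =>
    have : ⇑(T ^ (-(k:ℤ) - 1)) = ⇑T.symm ∘ ⇑(T ^ (-(k:ℤ))) := by
      funext x
      rw [show (-(k:ℤ) - 1) = -1 + -(k:ℤ) by ring, zpow_add, zpow_neg_one]; rfl
    rw [this]
    exact (hTsymm.mono trapped_subset_image).comp ih fun x hx => trapped_maps _ hx


lemma key [Nonempty M] (hΛc : IsCompact (trapped T Q))
    (hcont : ∀ i : ℤ, ContinuousOn ⇑(T ^ i) (trapped T Q))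
    {n : ℕ} (C : Fin n → Set M)
    (Hcl : ∀ j, ∀ x ∈ trapped T Q, x ∈ closure (C j) → x ∈ C j)
    (Hcov : ∀ x ∈ trapped T Q, ∃ j, x ∈ C j)
    (Huniq : ∀ s : ℤ → Fin n, ∀ x ∈ trapped T Q, ∀ y ∈ trapped T Q,
      (∀ i, ⇑(T ^ i) x ∈ closure (C (s i))) → (∀ i, ⇑(T ^ i) y ∈ closure (C (s i))) → x = y) :
    ∃ (S : Set (ℤ → Fin n)) (Φ : (ℤ → Fin n) → M),
      IsClosed S ∧ shft '' S = S ∧ ContinuousOn Φ S ∧ Φ '' S = trapped T Q ∧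
      (∀ s ∈ S, Φ (shft s) = T (Φ s)) ∧
      (∀ s ∈ S, Φ s ∈ trapped T Q ∧ ∀ i, ⇑(T ^ i) (Φ s) ∈ C (s i)) := by
  classical
  set Λ := trapped T Q with hΛdef
  have hΛclosed : IsClosed Λ := hΛc.isClosed
  set F : (ℤ → Fin n) → ℤ → Set M :=
    fun s i => Λ ∩ (⇑(T ^ i)) ⁻¹' closure (C (s i)) with hF
  have hFclosed : ∀ s i, IsClosed (F s i) := fun s i =>
    (hcont i).preimage_isClosed_of_isClosed hΛclosed isClosed_closure
  have hFsub : ∀ s i, F s i ⊆ Λ := fun s i => Set.inter_subset_left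
  set S : Set (ℤ → Fin n) := {s | (⋂ i : ℤ, F s i).Nonempty} with hSdef
  have hSmem : ∀ s, s ∈ S ↔ ∃ x ∈ Λ, ∀ i, ⇑(T ^ i) x ∈ closure (C (s i)) := by
    intro s
    constructor
    · rintro ⟨x, hx⟩
      simp only [Set.mem_iInter, hF, Set.mem_inter_iff, Set.mem_preimage] at hx
      exact ⟨x, (hx 0).1, fun i => (hx i).2⟩
    · rintro ⟨x, hxΛ, hxC⟩
      exact ⟨x, Set.mem_iInter.2 fun i => ⟨hxΛ, hxC i⟩⟩
  set Φ : (ℤ → Fin n) → M := fun s =>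
    if h : (⋂ i : ℤ, F s i).Nonempty then h.some else Classical.arbitrary M with hΦdef
  have hΦspec : ∀ s ∈ S, Φ s ∈ Λ ∧ ∀ i, ⇑(T ^ i) (Φ s) ∈ closure (C (s i)) := by
    intro s hs
    have hs' : (⋂ i : ℤ, F s i).Nonempty := hs
    have hmem := hs'.some_mem
    simp only [Set.mem_iInter, hF, Set.mem_inter_iff, Set.mem_preimage] at hmem
    have : Φ s = hs'.some := by rw [hΦdef]; exact dif_pos hs'
    rw [this]
    exact ⟨(hmem 0).1, fun i => (hmem i).2⟩
  have hΦuniq : ∀ s ∈ S, ∀ x ∈ Λ, (∀ i, ⇑(T ^ i) x ∈ closure (C (s i))) → Φ s = x := by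
    intro s hs x hxΛ hxC
    exact Huniq s _ (hΦspec s hs).1 x hxΛ (hΦspec s hs).2 hxC
  have hshift : ∀ s ∈ S, shft s ∈ S := by
    intro s hs
    obtain ⟨x, hxΛ, hxC⟩ := (hSmem s).1 hs
    refine (hSmem _).2 ⟨T x, ?_, fun i => ?_⟩
    · have := trapped_maps (T := T) (Q := Q) 1 hxΛ
      rwa [zpow_one] at this
    · rw [show ⇑(T ^ i) (T x) = ⇑(T ^ (i + 1)) x by rw [zpow_add_one]; rfl]
      exact hxC (i + 1)
  refine ⟨S, Φ, ?_, ?_, ?_, ?_, ?_, fun s hs =>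
    ⟨(hΦspec s hs).1, fun i => Hcl _ _ (trapped_maps i (hΦspec s hs).1) ((hΦspec s hs).2 i)⟩⟩
  · -- IsClosed S
    rw [← isOpen_compl_iff]
    rw [isOpen_iff_mem_nhds]
    intro s hsc
    have hempty : Λ ∩ ⋂ i : ℤ, F s i = ∅ := by
      by_contra hne
      exact hsc (Set.nonempty_iff_ne_empty.2 fun he => hne (by rw [he]; simp))
    obtain ⟨I, hI⟩ := hΛc.elim_finite_subfamily_closed (F s) (hFclosed s) hempty
    have hVopen : IsOpen ((↑I : Set ℤ).pi fun i => ({s i} : Set (Fin n))) :=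
      isOpen_set_pi I.finite_toSet fun i _ => isOpen_discrete _
    refine Filter.mem_of_superset (hVopen.mem_nhds ?_) ?_
    · exact Set.mem_pi.2 fun i _ => rfl
    · intro t ht htS
      obtain ⟨x, hxΛ, hxC⟩ := (hSmem t).1 htS
      have : x ∈ Λ ∩ ⋂ i ∈ I, F s i := by
        refine ⟨hxΛ, Set.mem_iInter₂.2 fun i hi => ⟨hxΛ, ?_⟩⟩
        have := Set.mem_pi.1 ht i hi
        simp only [Set.mem_singleton_iff] at this
        rw [← this]
        exact hxC i
      rw [hI] at this
      exact this
  · -- shft '' S = S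
    apply Set.Subset.antisymm
    · rintro _ ⟨s, hs, rfl⟩
      exact hshift s hs
    · intro s hs
      obtain ⟨x, hxΛ, hxC⟩ := (hSmem s).1 hs
      refine ⟨fun i => s (i - 1), ?_, ?_⟩
      · refine (hSmem _).2 ⟨⇑(T ^ (-1 : ℤ)) x, trapped_maps _ hxΛ, fun i => ?_⟩
        rw [show ⇑(T ^ i) (⇑(T ^ (-1:ℤ)) x) = ⇑(T ^ (i - 1)) x by
          rw [sub_eq_add_neg, zpow_add]; rfl]
        exact hxC (i - 1)
      · funext i
        show s (i + 1 - 1) = s i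
        congr 1
        ring
  · -- ContinuousOn Φ S
    intro s hs
    apply Metric.tendsto_nhds.2
    intro ε hε
    set K := Λ \ Metric.ball (Φ s) ε with hK
    have hKcomp : IsCompact K := hΛc.diff Metric.isOpen_ball
    have hempty : K ∩ ⋂ i : ℤ, F s i = ∅ := by
      rw [Set.eq_empty_iff_forall_notMem]
      rintro x ⟨hxK, hxF⟩
      simp only [Set.mem_iInter, hF, Set.mem_inter_iff, Set.mem_preimage] at hxF
      have hxeq : Φ s = x :=
        Huniq s _ (hΦspec s hs).1 x (hxF 0).1 (hΦspec s hs).2 (fun i => (hxF i).2)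
      exact hxK.2 (by rw [← hxeq]; simpa using hε)
    obtain ⟨I, hI⟩ := hKcomp.elim_finite_subfamily_closed (F s) (hFclosed s) hempty
    have hVopen : IsOpen ((↑I : Set ℤ).pi fun i => ({s i} : Set (Fin n))) :=
      isOpen_set_pi I.finite_toSet fun i _ => isOpen_discrete _
    have hVnhds : ((↑I : Set ℤ).pi fun i => ({s i} : Set (Fin n))) ∈ nhdsWithin s S :=
      nhdsWithin_le_nhds (hVopen.mem_nhds (Set.mem_pi.2 fun i _ => rfl))
    filter_upwards [hVnhds, self_mem_nhdsWithin] with t htV htS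
    obtain ⟨x, hxΛ, hxC⟩ := (hSmem t).1 htS
    have hxΦ : Φ t = x := hΦuniq t htS x hxΛ hxC
    have hxI : x ∈ K ∩ ⋂ i ∈ I, F s i → False := by
      intro hx
      rw [hI] at hx
      exact hx
    have hxball : x ∈ Metric.ball (Φ s) ε := by
      by_contra hxb
      refine hxI ⟨⟨hxΛ, hxb⟩, Set.mem_iInter₂.2 fun i hi => ⟨hxΛ, ?_⟩⟩
      have := Set.mem_pi.1 htV i hi
      simp only [Set.mem_singleton_iff] at this
      rw [← this]
      exact hxC i
    rw [hxΦ]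
    exact Metric.mem_ball.1 hxball
  · -- Φ '' S = Λ
    apply Set.Subset.antisymm
    · rintro _ ⟨s, hs, rfl⟩
      exact (hΦspec s hs).1
    · intro x hx
      set s : ℤ → Fin n := fun i => (Hcov _ (trapped_maps i hx)).choose with hsdef
      have hsS : s ∈ S := (hSmem s).2
        ⟨x, hx, fun i => subset_closure (Hcov _ (trapped_maps i hx)).choose_spec⟩
      exact ⟨s, hsS, hΦuniq s hsS x hx
        fun i => subset_closure (Hcov _ (trapped_maps i hx)).choose_spec⟩
  · -- equivariance
    intro s hs
    have hs' := hshift s hs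
    refine hΦuniq _ hs' (T (Φ s)) ?_ fun i => ?_
    · have := trapped_maps (T := T) (Q := Q) 1 (hΦspec s hs).1
      rwa [zpow_one] at this
    · rw [show ⇑(T ^ i) (T (Φ s)) = ⇑(T ^ (i + 1)) (Φ s) by rw [zpow_add_one]; rfl]
      exact (hΦspec s hs).2 (i + 1)


lemma part1 [Nonempty M] (hQ : IsCompact Q) (hT : ContinuousOn T Q)
    (hTsymm : ContinuousOn T.symm (⇑T '' Q)) (hexp : FMSExpansive T Q) :
    ∃ (n : ℕ) (S : Set (ℤ → Fin n)) (Φ : (ℤ → Fin n) → M),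
      IsClosed S ∧ shft '' S = S ∧
      ContinuousOn Φ S ∧ Φ '' S = trapped T Q ∧
      ∀ s ∈ S, Φ (shft s) = T (Φ s) := by
  classical
  obtain ⟨δ, hδ, hexp'⟩ := hexp
  have hΛc := trapped_isCompact hQ hT hTsymm
  have hcover : trapped T Q ⊆ ⋃ x ∈ trapped T Q, Metric.ball x (δ/2) := fun x hx =>
    Set.mem_biUnion hx (Metric.mem_ball_self (by linarith))
  obtain ⟨b, hbsub, hbfin, hbcov⟩ :=
    hΛc.elim_finite_subcover_image (fun x _ => Metric.isOpen_ball) hcover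
  set n := hbfin.toFinset.card with hn
  set e := hbfin.toFinset.equivFin with he
  set C : Fin n → Set M := fun j => Metric.closedBall ((e.symm j : M)) (δ/2) with hC
  have Hcl : ∀ j, ∀ x ∈ trapped T Q, x ∈ closure (C j) → x ∈ C j := fun j x _ hx => by
    rwa [Metric.isClosed_closedBall.closure_eq] at hx
  have Hcov : ∀ x ∈ trapped T Q, ∃ j, x ∈ C j := by
    intro x hx
    obtain ⟨c, hc, hxc⟩ := Set.mem_iUnion₂.1 (hbcov hx)
    refine ⟨e ⟨c, hbfin.mem_toFinset.2 hc⟩, ?_⟩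
    rw [hC]
    simp only [Equiv.symm_apply_apply]
    exact Metric.ball_subset_closedBall hxc
  have Huniq : ∀ s : ℤ → Fin n, ∀ x ∈ trapped T Q, ∀ y ∈ trapped T Q,
      (∀ i, ⇑(T ^ i) x ∈ closure (C (s i))) → (∀ i, ⇑(T ^ i) y ∈ closure (C (s i))) → x = y := by
    intro s x hx y hy hxC hyC
    by_contra hne
    obtain ⟨i, hi⟩ := hexp' x hx y hy hne
    have h1 := Hcl _ _ (trapped_maps i hx) (hxC i)
    have h2 := Hcl _ _ (trapped_maps i hy) (hyC i)
    rw [hC, Metric.mem_closedBall] at h1 h2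
    have := dist_triangle (⇑(T ^ i) x) ((e.symm (s i) : M)) (⇑(T ^ i) y)
    rw [dist_comm ((e.symm (s i) : M)) (⇑(T ^ i) y)] at this
    linarith
  obtain ⟨S, Φ, h1, h2, h3, h4, h5, _⟩ :=
    key hΛc (fun i => trapped_contOn hT hTsymm i) C Hcl Hcov Huniq
  exact ⟨n, S, Φ, h1, h2, h3, h4, h5⟩


lemma part2 [Nonempty M] (hQ : IsCompact Q) (hT : ContinuousOn T Q)
    (hTsymm : ContinuousOn T.symm (⇑T '' Q))
    (α : Finset (Set M)) (hgen : IsGenerator T Q α)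
    (hdisj : (α : Set (Set M)).Pairwise Disjoint) :
    (∃ (n : ℕ) (S : Set (ℤ → Fin n)) (Φ : (ℤ → Fin n) → M)
        (Ψ : M → (ℤ → Fin n)),
      IsClosed S ∧ shft '' S = S ∧
      ContinuousOn Φ S ∧ Φ '' S = trapped T Q ∧
      (∀ s ∈ S, Φ (shft s) = T (Φ s)) ∧
      Set.InjOn Φ S ∧ ContinuousOn Ψ (trapped T Q) ∧
      (∀ s ∈ S, Ψ (Φ s) = s)) ∧
    IsTotallyDisconnected (trapped T Q) := by
  classical
  obtain ⟨hopen, hcov0, hsub⟩ := hgen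
  have hΛc := trapped_isCompact hQ hT hTsymm
  have hcont : ∀ i : ℤ, ContinuousOn ⇑(T ^ i) (trapped T Q) :=
    fun i => trapped_contOn hT hTsymm i
  set m := α.card with hm
  set e := α.equivFin with he
  set C : Fin (m + 1) → Set M :=
    Fin.snoc (fun j => ((e.symm j : α) : Set M)) ∅ with hC
  have hCcast : ∀ j : Fin m, C j.castSucc = ((e.symm j : α) : Set M) := by
    intro j; rw [hC]; exact Fin.snoc_castSucc _ _ _
  have hClast : C (Fin.last m) = ∅ := by rw [hC]; exact Fin.snoc_last _ _
  have hCmem : ∀ j : Fin (m+1), C j = ∅ ∨ C j ∈ α := by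
    intro j
    refine Fin.lastCases ?_ ?_ j
    · left; exact hClast
    · intro j'; right; rw [hCcast]; exact (e.symm j').2
  have hCexists : ∀ A ∈ α, ∃ j, C j = A := by
    intro A hA
    refine ⟨(e ⟨A, hA⟩).castSucc, ?_⟩
    rw [hCcast]
    simp
  have hCopen : ∀ j, IsOpen (C j) := by
    intro j
    rcases hCmem j with hj | hj
    · rw [hj]; exact isOpen_empty
    · exact hopen _ hj
  have hCdisj : ∀ j k : Fin (m+1), j ≠ k → Disjoint (C j) (C k) := by
    intro j k hjk
    by_cases hj0 : C j = ∅
    · rw [hj0]; exact disjoint_bot_left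
    by_cases hk0 : C k = ∅
    · rw [hk0]; exact disjoint_bot_right
    have hjmem : C j ∈ α := (hCmem j).resolve_left hj0
    have hkmem : C k ∈ α := (hCmem k).resolve_left hk0
    have hjl : j ≠ Fin.last m := fun hh => hj0 (hh ▸ hClast)
    have hkl : k ≠ Fin.last m := fun hh => hk0 (hh ▸ hClast)
    obtain ⟨j', rfl⟩ := Fin.exists_castSucc_eq.2 hjl
    obtain ⟨k', rfl⟩ := Fin.exists_castSucc_eq.2 hkl
    have hne : C j'.castSucc ≠ C k'.castSucc := by
      intro heq
      apply hjk
      rw [hCcast, hCcast] at heq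
      have h2 : e.symm j' = e.symm k' := Subtype.ext heq
      have h3 := e.symm.injective h2
      rw [h3]
    exact hdisj hjmem hkmem hne
  have huniqj : ∀ (j k : Fin (m+1)) (z : M), z ∈ C j → z ∈ C k → j = k := by
    intro j k z hj hk
    by_contra hne
    exact Set.disjoint_left.1 (hCdisj j k hne) hj hk
  -- key hypotheses
  have Hcl : ∀ j, ∀ x ∈ trapped T Q, x ∈ closure (C j) → x ∈ C j := by
    intro j x hx hcl
    by_cases hj0 : C j = ∅
    · rw [hj0, closure_empty] at hcl; exact absurd hcl (Set.notMem_empty x)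
    have hjmem : C j ∈ α := (hCmem j).resolve_left hj0
    obtain ⟨A', hA', hxA'⟩ := hcov0 hx
    by_cases hAA : A' = C j
    · rwa [← hAA]
    · exfalso
      obtain ⟨z, hz1, hz2⟩ := _root_.mem_closure_iff.1 hcl A' (hopen _ hA') hxA'
      exact Set.disjoint_left.1 (hdisj hA' hjmem hAA) hz1 hz2
  have Hcov : ∀ x ∈ trapped T Q, ∃ j, x ∈ C j := by
    intro x hx
    obtain ⟨A, hA, hxA⟩ := hcov0 hx
    obtain ⟨j, hj⟩ := hCexists A hA
    exact ⟨j, hj ▸ hxA⟩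
  have Huniq : ∀ s : ℤ → Fin (m+1), ∀ x ∈ trapped T Q, ∀ y ∈ trapped T Q,
      (∀ i, ⇑(T ^ i) x ∈ closure (C (s i))) → (∀ i, ⇑(T ^ i) y ∈ closure (C (s i))) →
      x = y := by
    intro s x hx y hy hxC hyC
    have hmemα : ∀ i, C (s i) ∈ α := by
      intro i
      rcases hCmem (s i) with hh | hh
      · exfalso
        have h0 := hxC i
        rw [hh, closure_empty] at h0
        exact h0
      · exact hh
    set f : ℤ → Set M := fun i => C (s (-i)) with hf
    have hcode : ∀ z ∈ trapped T Q, (∀ i, ⇑(T ^ i) z ∈ closure (C (s i))) →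
        z ∈ Q ∩ ⋂ i : ℤ, ⇑(T ^ i) '' closure (f i) := by
      intro z hzΛ hz
      refine ⟨trapped_subset hzΛ, Set.mem_iInter.2 fun i => ?_⟩
      rw [Equiv.image_eq_preimage_symm, Set.mem_preimage,
        show ((T ^ i).symm : M → M) = ⇑(T ^ (-i)) by rw [← Equiv.Perm.inv_def, ← zpow_neg]]
      exact hz (-i)
    exact hsub f (fun i => hmemα (-i)) (hcode x hx hxC) (hcode y hy hyC)
  obtain ⟨S, Φ, h1, h2, h3, h4, h5, hspec⟩ :=
    key hΛc hcont C Hcl Hcov Huniq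
  -- the inverse map
  set Ψ : M → (ℤ → Fin (m+1)) := fun x i =>
    if h : ∃ j, ⇑(T ^ i) x ∈ C j then h.choose else Fin.last m with hΨ
  have hΨspec : ∀ x : M, ∀ i : ℤ, ⇑(T ^ i) x ∈ trapped T Q → ⇑(T ^ i) x ∈ C (Ψ x i) := by
    intro x i hx
    have hex : ∃ j, ⇑(T ^ i) x ∈ C j := Hcov _ hx
    rw [hΨ]
    simp only [dif_pos hex]
    exact hex.choose_spec
  have hΨΦ : ∀ s ∈ S, Ψ (Φ s) = s := by
    intro s hs
    funext i
    exact huniqj _ _ _ (hΨspec (Φ s) i (trapped_maps i (hspec s hs).1)) ((hspec s hs).2 i)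
  have hinjΦ : Set.InjOn Φ S := by
    intro s hs t ht heq
    have := hΨΦ s hs
    rw [heq, hΨΦ t ht] at this
    exact this.symm
  have hΨcont : ContinuousOn Ψ (trapped T Q) := by
    intro x hx
    have : Filter.Tendsto Ψ (nhdsWithin x (trapped T Q)) (nhds (Ψ x)) := by
      rw [tendsto_pi_nhds]
      intro i
      rw [nhds_discrete, Filter.tendsto_pure]
      have hmem : ⇑(T ^ i) x ∈ C (Ψ x i) := hΨspec x i (trapped_maps i hx)
      have hopeni : IsOpen (C (Ψ x i)) := hCopen _
      have hev1 : ∀ᶠ y in nhdsWithin x (trapped T Q), ⇑(T ^ i) y ∈ C (Ψ x i) :=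
        (hcont i x hx) (hopeni.mem_nhds hmem)
      filter_upwards [hev1, self_mem_nhdsWithin] with y hy hyΛ
      exact huniqj _ _ _ (hΨspec y i (trapped_maps i hyΛ)) hy
    exact this
  refine ⟨⟨m + 1, S, Φ, Ψ, h1, h2, h3, h4, h5, hinjΦ, hΨcont, hΨΦ⟩, ?_⟩
  -- total disconnectedness
  have hinjΨ : Set.InjOn Ψ (trapped T Q) := by
    intro x hx y hy heq
    rw [← h4] at hx hy
    obtain ⟨s, hs, rfl⟩ := hx
    obtain ⟨t, ht, rfl⟩ := hy
    rw [hΨΦ s hs, hΨΦ t ht] at heq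
    rw [heq]
  intro t hts htc
  intro x hx y hy
  have himg : IsPreconnected (Ψ '' t) := htc.image Ψ (hΨcont.mono hts)
  have hsub2 : (Ψ '' t).Subsingleton :=
    isTotallyDisconnected_of_totallyDisconnectedSpace Set.univ (Ψ '' t)
      (Set.subset_univ _) himg
  exact hinjΨ (hts hx) (hts hy)
    (hsub2 (Set.mem_image_of_mem Ψ hx) (Set.mem_image_of_mem Ψ hy))

end Stmt8Aux

/-- an expansive FMS admits a surjective semi-conjugacy
`Φ : Σ → Λ(T,Q)` from a subshift `Σ` over a finite alphabet; if moreover there is a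
generator of pairwise disjoint sets, `Φ` may be chosen to be a homeomorphism, and
then the trapped set is totally disconnected. -/
theorem stmt_8 {M : Type} [MetricSpace M] (T : Equiv.Perm M) (Q : Set M)
    (h : IsFMS T Q) (hexp : FMSExpansive T Q) :
    (∃ (n : ℕ) (S : Set (ℤ → Fin n)) (Φ : (ℤ → Fin n) → M),
      IsClosed S ∧ shft '' S = S ∧
      ContinuousOn Φ S ∧ Φ '' S = trapped T Q ∧
      ∀ s ∈ S, Φ (shft s) = T (Φ s)) ∧
    ((∃ α : Finset (Set M), IsGenerator T Q α ∧
        (α : Set (Set M)).Pairwise Disjoint) →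
      (∃ (n : ℕ) (S : Set (ℤ → Fin n)) (Φ : (ℤ → Fin n) → M)
          (Ψ : M → (ℤ → Fin n)),
        IsClosed S ∧ shft '' S = S ∧
        ContinuousOn Φ S ∧ Φ '' S = trapped T Q ∧
        (∀ s ∈ S, Φ (shft s) = T (Φ s)) ∧
        Set.InjOn Φ S ∧ ContinuousOn Ψ (trapped T Q) ∧
        (∀ s ∈ S, Ψ (Φ s) = s)) ∧
      IsTotallyDisconnected (trapped T Q)) := by
  obtain ⟨hQ, hT, hTsymm, hdiff, hint, hesc⟩ := h
  obtain ⟨x0, -⟩ := hint 0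
  have : Nonempty M := ⟨x0⟩
  refine ⟨Stmt8Aux.part1 hQ hT hTsymm hexp, ?_⟩
  rintro ⟨α, hgen, hdisj⟩
  exact Stmt8Aux.part2 hQ hT hTsymm α hgen hdisj
end

section
/- For every language L ⊆ A*, L(Adh(L)) = C(L), where C(L) = {a ∈ A* : for every N > 0 there exist x, y ∈ A* with |x|, |y| ≥ N and x a y ∈ L} is the center of L. -/
/-- A finite word `a` is a segment of the bi-infinite sequence `s`. -/
def IsSegment {A : Type} (a : List A) (s : ℤ → A) : Prop :=
  ∃ l : ℤ, ∀ j : Fin a.length, s (l + ((j : ℕ) : ℤ)) = a.get j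

/-- The central language of a set of sequences: all segments of its members. -/
def lang {A : Type} (S : Set (ℤ → A)) : Set (List A) :=
  {a | ∃ s ∈ S, IsSegment a s}

/-- The periodization of a nonempty word: `s̄_i = s_{i mod |s|}`. -/
def periodize {A : Type} (a : List A) (ha : a ≠ []) : ℤ → A := fun i =>
  a.get ⟨(i % (a.length : ℤ)).toNat, by
    have h0 : 0 < (a.length : ℤ) := by
      exact_mod_cast List.length_pos_iff.mpr ha
    have h1 : 0 ≤ i % (a.length : ℤ) := Int.emod_nonneg i (by omega)
    have h2 : i % (a.length : ℤ) < (a.length : ℤ) := Int.emod_lt_of_pos i h0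
    omega⟩

/-- The σ-periodic points of `S`: `Per(σ,S)`. -/
def PerSet {A : Type} (S : Set (ℤ → A)) : Set (ℤ → A) :=
  {s ∈ S | ∃ n : ℕ, 0 < n ∧ ∀ i : ℤ, s (i + (n : ℤ)) = s i}

/-- The cyclic language `L_c(S) = ζ⁻¹(Per(σ,S)) ∪ {ε}`. -/
def Lc {A : Type} (S : Set (ℤ → A)) : Set (List A) :=
  {a | ∃ ha : a ≠ [], periodize a ha ∈ PerSet S} ∪ {[]}

/-- The adherence of a language: sequences all of whose segments occur in words of `L`. -/
def Adh {A : Type} (L : Set (List A)) : Set (ℤ → A) :=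
  {s | ∀ a : List A, IsSegment a s → ∃ w ∈ L, a <:+: w}

/-- The center `C(L)`: bi-extensible words of `L`. -/
def Ctr {A : Type} (L : Set (List A)) : Set (List A) :=
  {a | ∀ N : ℕ, 0 < N → ∃ x y : List A,
    N ≤ x.length ∧ N ≤ y.length ∧ x ++ a ++ y ∈ L}

/-- The cyclic center `C_c(L)`: words all of whose repetitions' cyclic permutations
extend to words of `L` (together with the empty word, by convention). -/
def Cc {A : Type} (L : Set (List A)) : Set (List A) :=
  {a | a = [] ∨ (a ≠ [] ∧ ∀ i : ℕ, 0 < i → ∀ u v : List A,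
    u ++ v = List.flatten (List.replicate i a) →
    ∃ x y : List A, x ++ (v ++ u) ++ y ∈ L)}

/- ### Auxiliary material -/

private lemma getElem_idx_congr {A : Type} (w : List A) {i j : ℕ} (h : i = j)
    (hi : i < w.length) : w[i] = w[j]'(h ▸ hi) := by subst h; rfl

private lemma infix_of_get {A : Type} (b w : List A) (k : ℕ)
    (hk : k + b.length ≤ w.length)
    (h : ∀ j : ℕ, (hj : j < b.length) → b[j] = w[k + j]'(by omega)) :
    b <:+: w := by
  have hb : b = (w.drop k).take b.length := by
    apply List.ext_getElem
    · simp; omega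
    · intro i h1 h2
      rw [List.getElem_take, List.getElem_drop]
      exact h i h1
  rw [hb]
  exact ((List.take_prefix _ _).isInfix).trans (List.drop_suffix k w).isInfix

private lemma getElem_middle {A : Type} (x a y : List A) (j : ℕ) (hj : j < a.length) :
    (x ++ a ++ y)[x.length + j]'(by simp; omega) = a[j] := by
  rw [List.getElem_append_left (by simp; omega)]
  rw [List.getElem_append_right (by omega)]
  exact getElem_idx_congr _ (by omega) _

private def seqOf {A : Type} (d : A) (w : List A) : ℤ → A := fun i =>
  if h : 0 ≤ i ∧ i.toNat < w.length then w[i.toNat] else d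

private lemma seqOf_eq {A : Type} (d : A) (w : List A) (i : ℤ) (h0 : 0 ≤ i)
    (h1 : i.toNat < w.length) : seqOf d w i = w[i.toNat] := by
  rw [seqOf, dif_pos ⟨h0, h1⟩]

private lemma cluster_key {A : Type} [TopologicalSpace A] [DiscreteTopology A]
    (s : ℤ → A) (u : ℕ → ℤ → A) (hc : ClusterPt s (Filter.map u Filter.atTop))
    (l : ℤ) (n : ℕ) (M : ℕ) :
    ∃ N, M ≤ N ∧ ∀ j : ℕ, j < n → u N (l + j) = s (l + j) := by
  set F : Set ℤ := (fun j : ℕ => l + j) '' Set.Iio n with hF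
  have hFfin : F.Finite := (Set.finite_Iio n).image _
  have hU : IsOpen (F.pi fun i => {s i}) :=
    isOpen_set_pi hFfin (fun a _ => isOpen_discrete _)
  have hsU : s ∈ F.pi fun i => {s i} := fun i _ => rfl
  have hnhds : (F.pi fun i => {s i}) ∈ nhds s := hU.mem_nhds hsU
  have hmc : MapClusterPt s Filter.atTop u := hc
  have hfreq : ∃ᶠ N in Filter.atTop, u N ∈ F.pi fun i => {s i} :=
    (mapClusterPt_iff_frequently.mp hmc) _ hnhds
  obtain ⟨N, hN, hmem⟩ := Filter.frequently_atTop.mp hfreq M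
  exact ⟨N, hN, fun j hj => hmem (l + j) ⟨j, hj, rfl⟩⟩

/-- for every language `L ⊆ A*`, `L(Adh(L)) = C(L)`, the center of `L`. -/
theorem stmt_13 (A : Type) [Fintype A] [Nonempty A] [TopologicalSpace A]
    [DiscreteTopology A] (L : Set (List A)) :
    lang (Adh L) = Ctr L := by
  ext a
  constructor
  · rintro ⟨s, hs, l, hseg⟩
    intro N hN
    set x : List A := List.ofFn (fun j : Fin N => s (l - N + j)) with hx
    set y : List A := List.ofFn (fun j : Fin N => s (l + a.length + j)) with hy
    have hxlen : x.length = N := by simp [hx]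
    have hylen : y.length = N := by simp [hy]
    have hseg2 : IsSegment (x ++ a ++ y) s := by
      refine ⟨l - N, fun j => ?_⟩
      have hjlt : (j : ℕ) < N + a.length + N := by
        have := j.isLt; simp [hxlen, hylen] at this; omega
      rw [List.get_eq_getElem]
      rcases lt_or_ge (j : ℕ) N with h1 | h1
      · rw [List.getElem_append_left (by simp [hxlen]; omega),
          List.getElem_append_left (by omega)]
        simp only [hx, List.getElem_ofFn]
      · rcases lt_or_ge (j : ℕ) (N + a.length) with h2 | h2
        · rw [List.getElem_append_left (by simp [hxlen]; omega)]
          rw [List.getElem_append_right (by omega)]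
          have := hseg ⟨(j : ℕ) - N, by omega⟩
          rw [List.get_eq_getElem] at this
          rw [getElem_idx_congr _ (show (j : ℕ) - x.length = (j : ℕ) - N by rw [hxlen])]
          rw [← this]
          congr 1
          push_cast [Nat.cast_sub h1]
          ring
        · rw [List.getElem_append_right (by simp [hxlen]; omega)]
          simp only [hy, List.getElem_ofFn]
          have hlen' : (x ++ a).length = N + a.length := by simp [hxlen]
          congr 1
          rw [hlen']
          push_cast [Nat.cast_sub h2]
          ring
    obtain ⟨w, hwL, p, q, hpq⟩ := hs _ hseg2
    refine ⟨p ++ x, y ++ q, ?_, ?_, ?_⟩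
    · simp [hxlen]
    · simp [hylen]
    · have : (p ++ x) ++ a ++ (y ++ q) = p ++ (x ++ a ++ y) ++ q := by
        simp [List.append_assoc]
      rw [this, hpq]; exact hwL
  · intro h
    have H : ∀ N : ℕ, ∃ x y : List A,
        (N + 1) ≤ x.length ∧ (N + 1) ≤ y.length ∧ x ++ a ++ y ∈ L :=
      fun N => h (N + 1) (Nat.succ_pos N)
    choose X Y hX hY hW using H
    obtain ⟨d⟩ := ‹Nonempty A›
    set u : ℕ → ℤ → A := fun N i => seqOf d (X N ++ a ++ Y N) (i + (X N).length) with hu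
    obtain ⟨s, hs⟩ := exists_clusterPt_of_compactSpace (Filter.map u Filter.atTop)
    have hWlen : ∀ N, (X N ++ a ++ Y N).length = (X N).length + a.length + (Y N).length := by
      intro N; simp; omega
    have hval : ∀ N : ℕ, ∀ i : ℤ, 0 ≤ i + (X N).length →
        (hlt : (i + (X N).length).toNat < (X N ++ a ++ Y N).length) →
        u N i = (X N ++ a ++ Y N)[(i + (X N).length).toNat] := by
      intro N i h0 h1
      simp only [hu]
      exact seqOf_eq d _ _ h0 h1
    have hmid : ∀ N : ℕ, ∀ j : ℕ, (hj : j < a.length) → u N (j : ℤ) = a[j] := by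
      intro N j hj
      have h0 : (0 : ℤ) ≤ (j : ℤ) + (X N).length := by positivity
      have h1 : ((j : ℤ) + (X N).length).toNat < (X N ++ a ++ Y N).length := by
        rw [hWlen]; omega
      rw [hval N j h0 h1,
        getElem_idx_congr _ (show ((j : ℤ) + (X N).length).toNat = (X N).length + j by omega)]
      exact getElem_middle (X N) a (Y N) j hj
    refine ⟨s, ?_, 0, ?_⟩
    · rintro b ⟨l, hb⟩
      obtain ⟨N, hN, hagree⟩ := cluster_key s u hs l b.length (l.natAbs + b.length)
      refine ⟨X N ++ a ++ Y N, hW N, ?_⟩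
      have hXN := hX N
      have hYN := hY N
      have hlabs : l ≤ (l.natAbs : ℤ) ∧ -(l.natAbs : ℤ) ≤ l := by omega
      have hk : (l + (X N).length).toNat + b.length ≤ (X N ++ a ++ Y N).length := by
        rw [hWlen]; omega
      refine infix_of_get b _ (l + (X N).length).toNat hk (fun j hj => ?_)
      have hbj := hb ⟨j, hj⟩
      rw [List.get_eq_getElem] at hbj
      have h0 : (0 : ℤ) ≤ (l + j) + (X N).length := by omega
      have h1 : ((l + j) + (X N).length).toNat < (X N ++ a ++ Y N).length := by
        rw [hWlen]; omega
      have e3 := hval N (l + j) h0 h1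
      have e4 : (X N ++ a ++ Y N)[((l + j) + (X N).length).toNat]'h1
          = (X N ++ a ++ Y N)[(l + (X N).length).toNat + j]'(by omega) :=
        getElem_idx_congr _ (by omega) _
      exact hbj.symm.trans ((hagree j hj).symm.trans (e3.trans e4))
    · obtain ⟨N, _, hagree⟩ := cluster_key s u hs 0 a.length 0
      intro j
      have := hagree j j.isLt
      simp only [zero_add] at this ⊢
      rw [← this, hmid N j j.isLt, List.get_eq_getElem]
end

section
/- If Σ ⊆ A^ℤ is a cyclic subshift (periodic points dense in Σ), then Adh(L_c(Σ)) = Σ, where L_c(Σ) is the cyclic language of Σ. -/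
namespace Stmt14Aux

variable {A : Type}

def shiftl (l : ℤ) (s : ℤ → A) : ℤ → A := fun i => s (i + l)

lemma shiftl_mem {S : Set (ℤ → A)} (hS : shft '' S = S) {s : ℤ → A} (hs : s ∈ S)
    (l : ℤ) : shiftl l s ∈ S := by
  induction l using Int.induction_on with
  | zero =>
      have h : shiftl 0 s = s := by funext i; simp [shiftl]
      rw [h]; exact hs
  | succ k ih =>
      have h : shiftl ((k : ℤ)+1) s = shft (shiftl k s) := by
        funext i; simp only [shiftl, shft]; ring_nf
      rw [h, ← hS]; exact ⟨_, ih, rfl⟩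
  | pred k ih =>
      rw [← hS] at ih
      obtain ⟨t, ht, hts⟩ := ih
      have h : shiftl (-(k:ℤ)-1) s = t := by
        funext i
        have h2 := congrFun hts (i - 1)
        simp only [shft, shiftl] at h2 ⊢
        have h3 : t i = s (i - 1 + -(k:ℤ)) := by simpa using h2
        rw [h3]; ring_nf
      rw [h]; exact ht

def window (s : ℤ → A) (l : ℤ) (m : ℕ) : List A :=
  (List.range m).map (fun j : ℕ => s (l + (j : ℤ)))

lemma window_length (s : ℤ → A) (l : ℤ) (m : ℕ) : (window s l m).length = m := by
  simp only [window, List.length_map, List.length_range]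

lemma window_getElem (s : ℤ → A) (l : ℤ) (m : ℕ) (j : ℕ) (hj : j < (window s l m).length) :
    (window s l m)[j] = s (l + j) := by
  simp only [window, List.getElem_map, List.getElem_range]

lemma per_mul {p : ℤ → A} {n : ℕ} (hp : ∀ i : ℤ, p (i + n) = p i) (t : ℤ) (i : ℤ) :
    p (i + n * t) = p i := by
  induction t using Int.induction_on with
  | zero => simp
  | succ k ih =>
      have : i + (n:ℤ) * (k + 1) = (i + n * k) + n := by ring
      rw [this, hp, ih]
  | pred k ih =>
      have h2 := hp (i + n * (-(k:ℤ) - 1))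
      have : i + (n:ℤ) * (-(k:ℤ) - 1) + n = i + n * (-(k:ℤ)) := by ring
      rw [this] at h2
      exact h2.symm.trans ih

lemma periodize_window {p : ℤ → A} {n : ℕ} (hp : ∀ i : ℤ, p (i + n) = p i)
    (l : ℤ) (k : ℕ) (hne : window p l (n*k) ≠ []) :
    periodize (window p l (n*k)) hne = shiftl l p := by
  have hm : 0 < n * k := by
    by_contra h
    apply hne
    have : n * k = 0 := by omega
    simp [window, this]
  funext i
  set m : ℕ := n * k with hmdef
  have hlen : (window p l m).length = m := window_length p l m
  have h0 : 0 < (m : ℤ) := by exact_mod_cast hm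
  have h1 : 0 ≤ i % (m : ℤ) := Int.emod_nonneg i (by omega)
  have h2 : i % (m : ℤ) < (m : ℤ) := Int.emod_lt_of_pos i h0
  have hval : periodize (window p l m) hne i = p (l + ((i % (m:ℤ)).toNat : ℤ)) := by
    unfold periodize
    rw [List.get_eq_getElem]
    simp only [hlen]
    rw [window_getElem]
  rw [hval]
  have hcast : ((i % (m:ℤ)).toNat : ℤ) = i % m := Int.toNat_of_nonneg h1
  rw [hcast]
  have hdecomp : i + l = (l + i % (m:ℤ)) + (m:ℤ) * (i / (m:ℤ)) := by
    have h3 := Int.emod_add_mul_ediv i m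
    linarith
  have hmul : (m:ℤ) * (i / (m:ℤ)) = (n:ℤ) * ((k:ℤ) * (i / (m:ℤ))) := by
    rw [hmdef]; push_cast; ring
  show _ = p (i + l)
  rw [hdecomp, hmul]
  exact (per_mul hp _ _).symm

lemma periodize_get {a : List A} (ha : a ≠ []) (r : ℕ) (hr : r < a.length) :
    periodize a ha ((r : ℤ)) = a[r] := by
  unfold periodize
  have h1 : ((r : ℤ)) % (a.length : ℤ) = r :=
    Int.emod_eq_of_lt (by positivity) (by exact_mod_cast hr)
  have h2 : (((r : ℤ)) % (a.length : ℤ)).toNat = r := by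
    rw [h1]; exact Int.toNat_natCast r
  simp only [List.get_eq_getElem, h2]

end Stmt14Aux

/-- if `Σ ⊆ A^ℤ` is a cyclic subshift (periodic points dense), then
`Adh(L_c(Σ)) = Σ`. -/
theorem stmt_14 (A : Type) [Fintype A] [Nonempty A] [TopologicalSpace A]
    [DiscreteTopology A] (S : Set (ℤ → A))
    (hS : IsClosed S ∧ shft '' S = S) (hcyc : S ⊆ closure (PerSet S)) :
    Adh (Lc S) = S := by
  open Stmt14Aux in
  obtain ⟨hclosed, hshift⟩ := hS
  apply Set.eq_of_subset_of_subset
  · intro s hs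
    have key : ∀ N : ℕ, ∃ t ∈ S, ∀ i : ℤ, i.natAbs ≤ N → t i = s i := by
      intro N
      have halen : (window s (-(N:ℤ)) (2*N+1)).length = 2*N+1 := window_length _ _ _
      have hseg : IsSegment (window s (-(N:ℤ)) (2*N+1)) s := by
        refine ⟨-(N:ℤ), fun j => ?_⟩
        rw [List.get_eq_getElem, window_getElem]
      obtain ⟨w, hw, hinf⟩ := hs _ hseg
      obtain ⟨x, y, hxy⟩ := hinf
      subst hxy
      have hwne : x ++ window s (-(N:ℤ)) (2*N+1) ++ y ≠ [] := by
        intro h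
        have h2 := congrArg List.length h
        simp [halen] at h2
      obtain ⟨hne, hper⟩ : ∃ hne : x ++ window s (-(N:ℤ)) (2*N+1) ++ y ≠ [],
          periodize _ hne ∈ PerSet S := by
        rcases hw with h | h
        · exact h
        · exact absurd h hwne
      obtain ⟨hqS, -⟩ := hper
      refine ⟨shiftl ((x.length : ℤ) + N) (periodize _ hne),
        shiftl_mem hshift hqS _, ?_⟩
      intro i hi
      set j : ℕ := (i + N).toNat with hj
      have hji : (j : ℤ) = i + N := Int.toNat_of_nonneg (by omega)
      have hjlt : j < 2*N+1 := by omega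
      have hr : x.length + j < (x ++ window s (-(N:ℤ)) (2*N+1) ++ y).length := by
        simp [halen]; omega
      have h1 : shiftl ((x.length : ℤ) + N) (periodize _ hne) i
          = periodize _ hne ((x.length + j : ℕ) : ℤ) := by
        show periodize _ hne (i + ((x.length : ℤ) + N)) = _
        congr 1; push_cast; omega
      rw [h1, periodize_get hne _ hr]
      rw [List.getElem_append_left (by simp [halen]; omega)]
      rw [List.getElem_append_right (Nat.le_add_right _ _)]
      rw [window_getElem]
      congr 1
      omega
    choose t htS hts using key
    have htend : Filter.Tendsto t Filter.atTop (nhds s) := by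
      rw [tendsto_pi_nhds]
      intro i
      have hev : ∀ᶠ N in Filter.atTop, t N i = s i :=
        Filter.eventually_atTop.2 ⟨i.natAbs, fun N hN => hts N i hN⟩
      exact Filter.Tendsto.congr' (hev.mono fun N h => h.symm) tendsto_const_nhds
    exact hclosed.mem_of_tendsto htend (Filter.Eventually.of_forall htS)
  · intro s hs a haseg
    rcases eq_or_ne a [] with rfl | hane
    · exact ⟨[], Or.inr rfl, List.nil_infix⟩
    obtain ⟨l, hl⟩ := haseg
    set U : Set (ℤ → A) :=
      ⋂ j : Fin a.length, (fun t : ℤ → A => t (l + ((j : ℕ) : ℤ))) ⁻¹' {s (l + ((j : ℕ) : ℤ))}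
      with hU
    have hUopen : IsOpen U := isOpen_iInter_of_finite fun j =>
      (continuous_apply _).isOpen_preimage _ (isOpen_discrete _)
    have hsU : s ∈ U := Set.mem_iInter.2 fun j => rfl
    obtain ⟨p, hpU, hpPer⟩ := (mem_closure_iff.1 (hcyc hs)) U hUopen hsU
    obtain ⟨hpS, n, hn, hpp⟩ := hpPer
    set m := n * a.length with hm
    have hmp : 0 < m := Nat.mul_pos hn (List.length_pos_iff.2 hane)
    have halem : a.length ≤ m := by
      rw [hm]; nlinarith [List.length_pos_iff.2 hane]
    have hwlen : (window p l m).length = m := window_length _ _ _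
    have hwne : window p l m ≠ [] := by
      intro h; rw [h] at hwlen; simp at hwlen; omega
    refine ⟨window p l m, Or.inl ⟨hwne, ?_⟩, ?_⟩
    · rw [periodize_window hpp l a.length]
      refine ⟨shiftl_mem hshift hpS l, n, hn, fun i => ?_⟩
      show p (i + n + l) = p (i + l)
      rw [show i + (n:ℤ) + l = (i + l) + n by ring]
      exact hpp _
    · have haeq : a = (window p l m).take a.length := by
        apply List.ext_getElem
        · simp [hwlen]; omega
        · intro i hi hi2
          have hi' : i < a.length := hi
          rw [List.getElem_take, window_getElem]
          have h2 := hl ⟨i, hi'⟩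
          rw [List.get_eq_getElem] at h2
          have h3 : p (l + (i:ℤ)) = s (l + (i:ℤ)) := Set.mem_iInter.1 hpU ⟨i, hi'⟩
          rw [h3, h2]
      rw [haeq]
      exact (List.take_prefix _ _).isInfix
end

section
/- For every language L ⊆ A*, L_c(Adh(L)) = C_c(L), where C_c(L) = {a ∈ A* : for every i > 0 and every cyclic permutation π(a^i) of the i-fold repetition of a, there exist x, y ∈ A* with x·π(a^i)·y ∈ L} is the cyclic center of L. -/
lemma len_repl {A : Type} (a : List A) (i : ℕ) :
    (List.flatten (List.replicate i a)).length = i * a.length := by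
  simp [List.length_flatten, mul_comm]


lemma repl_get {A : Type} (a : List A) (i j : ℕ)
    (h : j < (List.flatten (List.replicate i a)).length) :
    (List.flatten (List.replicate i a))[j] =
      a[j % a.length]'(Nat.mod_lt _ (by
        rw [len_repl] at h
        rcases Nat.eq_zero_or_pos a.length with h0 | h0
        · simp [h0] at h
        · exact h0)) := by
  induction i generalizing j with
  | zero => simp [len_repl] at h
  | succ i ih =>
      have hn : 0 < a.length := by
        rw [len_repl] at h
        rcases Nat.eq_zero_or_pos a.length with h0 | h0
        · simp [h0] at h
        · exact h0
      have hlen : (List.flatten (List.replicate (i+1) a)) = a ++ List.flatten (List.replicate i a) := by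
        simp [List.replicate_succ]
      rcases lt_or_ge j a.length with hj | hj
      · have : j % a.length = j := Nat.mod_eq_of_lt hj
        simp_rw [hlen]
        rw [List.getElem_append_left hj]
        congr 1
        omega
      · have h' : j - a.length < (List.flatten (List.replicate i a)).length := by
          rw [len_repl] at h ⊢
          rw [Nat.succ_mul] at h
          omega
        simp_rw [hlen]
        rw [List.getElem_append_right hj]
        rw [ih _ h']
        congr 1
        exact (Nat.mod_eq_sub_mod hj).symm

lemma rot_get {A : Type} {a : List A} (u v : List A) {i : ℕ} (hn : 0 < a.length)
    (h : u ++ v = List.flatten (List.replicate i a)) {j : ℕ} (hj : j < (v ++ u).length) :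
    (v ++ u)[j] = a[(u.length + j) % a.length]'(Nat.mod_lt _ hn) := by
  have hlen : u.length + v.length = i * a.length := by
    have := congrArg List.length h
    simpa [len_repl] using this
  rcases lt_or_ge j v.length with hjv | hjv
  · have h2 : u.length + j < (u ++ v).length := by
      simp only [List.length_append]; omega
    have e1 : (u ++ v)[u.length + j]'h2 = v[j]'hjv := by
      rw [List.getElem_append_right (by omega)]
      congr 1
      omega
    have e2 : (v ++ u)[j] = v[j]'hjv := List.getElem_append_left hjv
    rw [e2, ← e1, List.getElem_of_eq h, repl_get]
  · have hju : j - v.length < u.length := by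
      have := hj
      simp only [List.length_append] at this
      omega
    have h2 : j - v.length < (u ++ v).length := by
      simp only [List.length_append]; omega
    have e1 : (u ++ v)[j - v.length]'h2 = u[j - v.length]'hju :=
      List.getElem_append_left hju
    have e2 : (v ++ u)[j] = u[j - v.length]'hju := by
      rw [List.getElem_append_right hjv]
    rw [e2, ← e1, List.getElem_of_eq h, repl_get]
    congr 1
    have : u.length + j = (j - v.length) + i * a.length := by omega
    rw [this, Nat.add_mul_mod_self_right]

lemma periodize_add {A : Type} (a : List A) (ha : a ≠ []) (l : ℤ) (j : ℕ) :
    periodize a ha (l + (j : ℤ)) =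
      a[((l % (a.length : ℤ)).toNat + j) % a.length]'(Nat.mod_lt _ (List.length_pos_iff.mpr ha)) := by
  have hn : 0 < (a.length : ℤ) := by exact_mod_cast List.length_pos_iff.mpr ha
  unfold periodize
  simp only [List.get_eq_getElem]
  congr 1
  have hk : ((l % (a.length : ℤ)).toNat : ℤ) = l % (a.length : ℤ) :=
    Int.toNat_of_nonneg (Int.emod_nonneg l (by omega))
  have h1 : (l + (j : ℤ)) % (a.length : ℤ)
      = (((l % (a.length : ℤ)).toNat + j : ℕ) : ℤ) % (a.length : ℤ) := by
    push_cast [hk]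
    rw [Int.emod_add_emod]
  rw [h1, ← Int.natCast_mod, Int.toNat_natCast]

lemma periodize_natCast {A : Type} (a : List A) (ha : a ≠ []) (m : ℕ) :
    periodize a ha (m : ℤ) =
      a[m % a.length]'(Nat.mod_lt _ (List.length_pos_iff.mpr ha)) := by
  have := periodize_add a ha 0 m
  simpa using this

lemma periodize_shift {A : Type} (a : List A) (ha : a ≠ []) (i : ℤ) :
    periodize a ha (i + (a.length : ℤ)) = periodize a ha i := by
  unfold periodize
  simp only [List.get_eq_getElem]
  congr 1
  rw [show i + ((a.length:ℤ)) = i + (a.length:ℤ) * 1 by ring, Int.add_mul_emod_self_left]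

/-- for every language `L ⊆ A*`, `L_c(Adh(L)) = C_c(L)`,
the cyclic center of `L`. -/
theorem stmt_15 (A : Type) [Fintype A] [Nonempty A] [TopologicalSpace A]
    [DiscreteTopology A] (L : Set (List A)) :
    Lc (Adh L) = Cc L := by
  ext a
  simp only [Lc, Cc, PerSet, Set.mem_union, Set.mem_setOf_eq, Set.mem_singleton_iff,
    Set.mem_sep_iff]
  constructor
  · rintro (⟨ha, hAdh, -⟩ | rfl)
    · right
      refine ⟨ha, ?_⟩
      intro i hi u v huv
      have hn : 0 < a.length := List.length_pos_iff.mpr ha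
      obtain ⟨w, hwL, x, y, hxy⟩ := hAdh (v ++ u) ⟨(u.length : ℤ), by
        intro j
        have hc : (u.length : ℤ) + ((j : ℕ) : ℤ) = ((u.length + (j : ℕ) : ℕ) : ℤ) := by
          push_cast; ring
        rw [hc, periodize_natCast, List.get_eq_getElem]
        exact (rot_get u v hn huv j.isLt).symm⟩
      exact ⟨x, y, by rw [hxy]; exact hwL⟩
    · left; rfl
  · rintro (rfl | ⟨ha, hC⟩)
    · right; rfl
    · left
      have hn : 0 < a.length := List.length_pos_iff.mpr ha
      refine ⟨ha, ?_, a.length, hn, fun i => periodize_shift a ha i⟩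
      rintro b ⟨l, hseg⟩
      set n := a.length with hnn
      set k := (l % (n : ℤ)).toNat with hkdef
      have hkn : k < n := by
        have h1 : l % (n : ℤ) < (n : ℤ) := Int.emod_lt_of_pos l (by exact_mod_cast hn)
        have h2 : 0 ≤ l % (n : ℤ) := Int.emod_nonneg l (by omega)
        omega
      set i := b.length + 1 with hidef
      have hflen : (List.flatten (List.replicate i a)).length = i * n := len_repl a i
      have hin : k + b.length < i * n := by
        have : i * n = b.length * n + n := by rw [hidef]; ring
        nlinarith
      set u := (List.flatten (List.replicate i a)).take k with hudef
      set v := (List.flatten (List.replicate i a)).drop k with hvdef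
      have hul : u.length = k := by
        rw [hudef, List.length_take, hflen]
        omega
      have huv : u ++ v = List.flatten (List.replicate i a) := List.take_append_drop _ _
      obtain ⟨x, y, hxy⟩ := hC i (by omega) u v huv
      refine ⟨x ++ (v ++ u) ++ y, hxy, ?_⟩
      have hvul : (v ++ u).length = i * n := by
        have := congrArg List.length huv
        simp only [List.length_append] at this ⊢
        omega
      have hpre : b <+: v ++ u := by
        rw [List.prefix_iff_eq_take]
        apply List.ext_getElem
        · rw [List.length_take, hvul]; omega
        · intro j hj hj'
          have hjb : j < b.length := hj
          rw [List.getElem_take]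
          rw [rot_get u v hn huv (by rw [hvul]; omega)]
          have := hseg ⟨j, hjb⟩
          rw [List.get_eq_getElem] at this
          rw [← this, periodize_add]
          congr 1
          rw [hul]
      exact hpre.isInfix.trans ⟨x, y, rfl⟩
end

section
/- The pair of maps (L, Adh) establishes a bijective correspondence between central languages over A (languages L with C(L) = L) and subshifts over A; likewise (L_c, Adh) establishes a bijective correspondence between cyclic languages (languages L with C_c(L) = L) and cyclic subshifts over A. -/
/-- A subshift: a closed shift-invariant subset of `A^ℤ`. -/
def IsSubshift {A : Type} [TopologicalSpace A] (S : Set (ℤ → A)) : Prop :=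
  IsClosed S ∧ shft '' S = S

/-- A cyclic subshift: a subshift whose σ-periodic points are dense. -/
def IsCyclicSubshift {A : Type} [TopologicalSpace A] (S : Set (ℤ → A)) : Prop :=
  IsSubshift S ∧ S ⊆ closure (PerSet S)

namespace Scratch
variable {A : Type}

def window (s : ℤ → A) (l : ℤ) (m : ℕ) : List A :=
  List.ofFn fun j : Fin m => s (l + (j : ℕ))

@[simp] lemma window_length (s : ℤ → A) (l : ℤ) (m : ℕ) :
    (window s l m).length = m := List.length_ofFn

lemma window_getElem (s : ℤ → A) (l : ℤ) (m : ℕ) (j : ℕ) (hj : j < m) :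
    (window s l m)[j]'(by simpa) = s (l + j) := by
  simp [window]

lemma isSegment_window (s : ℤ → A) (l : ℤ) (m : ℕ) :
    IsSegment (window s l m) s := by
  refine ⟨l, fun j => ?_⟩
  have hj : (j : ℕ) < m := by simpa using j.isLt
  rw [List.get_eq_getElem]
  simpa using (window_getElem s l m j hj).symm

lemma isSegment_iff {a : List A} {s : ℤ → A} :
    IsSegment a s ↔ ∃ l, a = window s l a.length := by
  constructor
  · rintro ⟨l, h⟩
    refine ⟨l, List.ext_getElem (by simp) fun j hj hj' => ?_⟩
    rw [window_getElem s l a.length j (by simpa using hj)]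
    exact (h ⟨j, hj⟩).symm
  · rintro ⟨l, h⟩
    rw [h]
    exact isSegment_window s l _

lemma window_add (s : ℤ → A) (l : ℤ) (m n : ℕ) :
    window s l (m + n) = window s l m ++ window s (l + m) n := by
  refine List.ext_getElem (by simp) fun j hj hj' => ?_
  rw [window_getElem s l (m+n) j (by simpa using hj)]
  rcases lt_or_ge j m with h | h
  · rw [List.getElem_append_left (by simpa using h)]
    rw [window_getElem s l m j h]
  · rw [List.getElem_append_right (by simpa using h)]
    simp only [window_length]
    rw [window_getElem s (l + m) n (j - m) (by simp at hj; omega)]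
    congr 1
    omega

lemma window_congr {s t : ℤ → A} {l : ℤ} {m : ℕ}
    (h : ∀ i : ℤ, l ≤ i → i < l + m → s i = t i) :
    window s l m = window t l m := by
  refine List.ext_getElem (by simp) fun j hj hj' => ?_
  rw [window_getElem s l m j (by simpa using hj),
      window_getElem t l m j (by simpa using hj)]
  exact h _ (by omega) (by push_cast; simp at hj; omega)

lemma window_infix {s : ℤ → A} {l l' : ℤ} {m m' : ℕ}
    (h1 : l' ≤ l) (h2 : l + m ≤ l' + m') :
    window s l m <:+: window s l' m' := by
  set d : ℕ := (l - l').toNat with hd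
  have hld : l = l' + d := by omega
  have hdm : d + m ≤ m' := by omega
  have : window s l' m' = window s l' d ++ (window s l m ++ window s (l + m) (m' - d - m)) := by
    rw [← window_add, hld, ← window_add]
    congr 1
    omega
  rw [this]
  exact ⟨window s l' d, window s (l + m) (m' - d - m), by simp⟩


variable {A : Type}

lemma len_pos {a : List A} (ha : a ≠ []) : 0 < a.length := List.length_pos_iff.mpr ha

lemma emod_bounds {i : ℤ} {n : ℕ} (hn : 0 < n) :
    0 ≤ i % (n : ℤ) ∧ i % (n : ℤ) < n :=
  ⟨Int.emod_nonneg i (by exact_mod_cast hn.ne'), Int.emod_lt_of_pos i (by exact_mod_cast hn)⟩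

lemma periodize_eq_getElem (a : List A) (ha : a ≠ []) (i : ℤ) :
    periodize a ha i = a[(i % (a.length : ℤ)).toNat]'(by
      obtain ⟨h1, h2⟩ := emod_bounds (n := a.length) (i := i) (len_pos ha); omega) := by
  rfl

lemma periodize_congr (a : List A) (ha : a ≠ []) {i j : ℤ}
    (h : i % (a.length : ℤ) = j % (a.length : ℤ)) :
    periodize a ha i = periodize a ha j := by
  simp only [periodize_eq_getElem, h]

lemma periodize_of_lt (a : List A) (ha : a ≠ []) {i : ℤ} (h0 : 0 ≤ i)
    (h1 : i < a.length) :
    periodize a ha i = a[i.toNat]'(by omega) := by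
  rw [periodize_eq_getElem]
  congr 1
  rw [Int.emod_eq_of_lt h0 h1]

lemma periodize_period (a : List A) (ha : a ≠ []) (i : ℤ) :
    periodize a ha (i + a.length) = periodize a ha i :=
  periodize_congr a ha (by
    have := Int.add_mul_emod_self_right (a := i) (b := 1) (c := (a.length:ℤ))
    simpa using this)

lemma periodic_int {t : ℤ → A} {p : ℤ} (hp : ∀ i, t (i + p) = t i) :
    ∀ (k : ℤ) (i : ℤ), t (i + k * p) = t i := by
  intro k
  induction k using Int.induction_on with
  | zero => simp
  | succ k ih => intro i
                 have : i + (k + 1) * p = (i + p) + k * p := by ring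
                 rw [this, ih, hp]
  | pred k ih => intro i
                 have key := hp (i + (-(k:ℤ) - 1) * p)
                 have e : i + (-(k:ℤ) - 1) * p + p = i + -(k:ℤ) * p := by ring
                 rw [e, ih] at key
                 exact key.symm

lemma periodic_emod {t : ℤ → A} {p : ℤ} (hp0 : 0 < p) (hp : ∀ i, t (i + p) = t i)
    {i j : ℤ} (hij : i % p = j % p) : t i = t j := by
  have hd : p ∣ (j - i) := Int.ModEq.dvd (show Int.ModEq p i j from hij)
  obtain ⟨k, hk⟩ := hd
  have hj : j = i + k * p := by rw [mul_comm k p]; omega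
  rw [hj, periodic_int hp]

def rep (i : ℕ) (a : List A) : List A := (List.replicate i a).flatten

lemma rep_length (i : ℕ) (a : List A) : (rep i a).length = i * a.length := by
  induction i with
  | zero => simp [rep]
  | succ n ih =>
    have h : rep (n+1) a = a ++ rep n a := by simp [rep, List.replicate_succ]
    rw [h, List.length_append, ih, Nat.succ_mul]
    omega

lemma rep_getElem (i : ℕ) (a : List A) (j : ℕ) (hj : j < i * a.length) :
    (rep i a)[j]'(by rw [rep_length]; exact hj) =
      a[j % a.length]'(Nat.mod_lt _ (by
        rcases Nat.eq_zero_or_pos a.length with h | h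
        · rw [h, Nat.mul_zero] at hj; omega
        · exact h)) := by
  induction i generalizing j with
  | zero => omega
  | succ n ih =>
    have hmul : (n+1) * a.length = a.length + n * a.length := by ring
    have ha : 0 < a.length := by
      rcases Nat.eq_zero_or_pos a.length with h | h
      · rw [h, Nat.mul_zero] at hj; omega
      · exact h
    have hrep : rep (n+1) a = a ++ rep n a := by simp [rep, List.replicate_succ]
    rcases lt_or_ge j a.length with h | h
    · rw [List.getElem_of_eq hrep, List.getElem_append_left h]
      congr 1
      exact (Nat.mod_eq_of_lt h).symm
    · rw [List.getElem_of_eq hrep, List.getElem_append_right h]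
      have h2 : j - a.length < n * a.length := by omega
      rw [ih (j - a.length) h2]
      congr 1
      conv_rhs => rw [Nat.mod_eq_sub_mod h]

lemma periodize_rep (i : ℕ) (hi : 0 < i) (a : List A) (ha : a ≠ [])
    (hr : rep i a ≠ []) (m : ℤ) :
    periodize (rep i a) hr m = periodize a ha m := by
  have hn : 0 < a.length := len_pos ha
  have hL : (rep i a).length = i * a.length := rep_length i a
  have hLpos : 0 < (rep i a).length := by rw [hL]; positivity
  rw [periodize_eq_getElem, periodize_eq_getElem]
  obtain ⟨hm0, hm1⟩ := emod_bounds (i := m) (n := (rep i a).length) hLpos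
  obtain ⟨hq0, hq1⟩ := emod_bounds (i := m) (n := a.length) hn
  have key := rep_getElem i a (m % ((rep i a).length : ℤ)).toNat (by omega)
  rw [key]
  congr 1
  have h1 : ((m % ((rep i a).length : ℤ)) % (a.length : ℤ)) = m % a.length := by
    apply Int.emod_emod_of_dvd
    rw [hL]; push_cast; exact ⟨i, by ring⟩
  have h2 : (((m % ((rep i a).length : ℤ)).toNat : ℤ)) = m % ((rep i a).length : ℤ) :=
    Int.toNat_of_nonneg hm0
  have h3 : ((((m % ((rep i a).length : ℤ)).toNat % a.length : ℕ)) : ℤ) =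
      ((m % ((rep i a).length : ℤ)).toNat : ℤ) % (a.length : ℤ) := by push_cast; ring
  have : ((((m % ((rep i a).length : ℤ)).toNat % a.length : ℕ)) : ℤ) =
      ((m % (a.length : ℤ)).toNat : ℤ) := by
    rw [h3, h2, h1]
    exact (Int.toNat_of_nonneg hq0).symm
  exact_mod_cast this

lemma rotate_getElem {u v : List A} (j : ℕ) (hj : j < v.length + u.length) :
    (v ++ u)[j]'(by simp; omega) =
      (u ++ v)[(j + u.length) % (u.length + v.length)]'(by
        simp only [List.length_append]
        exact Nat.mod_lt _ (by omega)) := by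
  rcases lt_or_ge j v.length with h | h
  · rw [List.getElem_append_left h]
    have hm : (j + u.length) % (u.length + v.length) = j + u.length :=
      Nat.mod_eq_of_lt (by omega)
    have : (u ++ v)[(j + u.length) % (u.length + v.length)]'(by
        simp only [List.length_append]; exact Nat.mod_lt _ (by omega)) =
        (u ++ v)[j + u.length]'(by simp only [List.length_append]; omega) := by
      congr 1
    rw [this, List.getElem_append_right (by omega)]
    congr 1
    omega
  · rw [List.getElem_append_right h]
    have hm : (j + u.length) % (u.length + v.length) = j - v.length := by
      rw [Nat.mod_eq_sub_mod (by omega)]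
      have e : j + u.length - (u.length + v.length) = j - v.length := by omega
      rw [e]
      exact Nat.mod_eq_of_lt (by omega)
    have : (u ++ v)[(j + u.length) % (u.length + v.length)]'(by
        simp only [List.length_append]; exact Nat.mod_lt _ (by omega)) =
        (u ++ v)[j - v.length]'(by simp only [List.length_append]; omega) := by
      congr 1
    rw [this, List.getElem_append_left (by omega)]

lemma periodize_rotate {a u v : List A} (ha : a ≠ []) {i : ℕ} (hi : 0 < i)
    (huv : u ++ v = rep i a) (hvu : v ++ u ≠ []) (m : ℤ) :
    periodize (v ++ u) hvu m = periodize a ha (m + u.length) := by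
  have hn : 0 < a.length := len_pos ha
  have hlen : u.length + v.length = i * a.length := by
    rw [← List.length_append, huv, rep_length]
  have hL : (v ++ u).length = i * a.length := by
    rw [List.length_append]; omega
  have hLpos : 0 < (v ++ u).length := by rw [hL]; exact Nat.mul_pos hi hn
  have hrep : rep i a ≠ [] := List.ne_nil_of_length_pos (by
    rw [rep_length]; exact Nat.mul_pos hi hn)
  obtain ⟨hm0, hm1⟩ := emod_bounds (i := m) (n := (v ++ u).length) hLpos
  obtain ⟨hq0, hq1⟩ := emod_bounds (i := m + u.length) (n := a.length) hn
  rw [periodize_eq_getElem]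
  set r : ℕ := (m % (((v ++ u).length : ℕ) : ℤ)).toNat with hr
  have hvul : (v ++ u).length = v.length + u.length := by simp
  have hrlt : r < v.length + u.length := by omega
  rw [rotate_getElem r hrlt]
  have hrw : (u ++ v)[(r + u.length) % (u.length + v.length)]'(by
      simp only [List.length_append]; exact Nat.mod_lt _ (by omega)) =
      (rep i a)[(r + u.length) % (u.length + v.length)]'(by
        rw [rep_length, ← hlen]; exact Nat.mod_lt _ (by omega)) := by
    congr 1
  rw [hrw, rep_getElem i a _ (by rw [← hlen]; exact Nat.mod_lt _ (by omega))]
  rw [periodize_eq_getElem]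
  congr 1
  have hdvd : ((a.length : ℤ)) ∣ (((v ++ u).length : ℕ) : ℤ) := by
    rw [hL]; push_cast; exact ⟨i, by ring⟩
  have e1 : ((((r + u.length) % (u.length + v.length)) % a.length : ℕ) : ℤ) =
      (((r : ℤ) + u.length) % ((u.length : ℤ) + v.length)) % (a.length : ℤ) := by
    push_cast; ring
  have e2 : (((r + u.length : ℤ)) % ((u.length : ℤ) + v.length)) % (a.length : ℤ) =
      ((r : ℤ) + u.length) % (a.length : ℤ) := by
    apply Int.emod_emod_of_dvd
    have e : ((u.length : ℤ) + v.length) = (((v ++ u).length : ℕ) : ℤ) := by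
      rw [hvul]; push_cast; ring
    rw [e]; exact hdvd
  have e3 : ((r : ℤ)) = m % (((v ++ u).length : ℕ) : ℤ) := Int.toNat_of_nonneg hm0
  have e4 : ((r : ℤ) + u.length) % (a.length : ℤ) = (m + u.length) % (a.length : ℤ) := by
    rw [e3, Int.add_emod, Int.emod_emod_of_dvd _ hdvd, ← Int.add_emod]
  have goalz : ((((r + u.length) % (u.length + v.length)) % a.length : ℕ) : ℤ) =
      (((m + (u.length : ℤ)) % (a.length : ℤ)).toNat : ℤ) := by
    rw [e1, e2, e4]
    exact (Int.toNat_of_nonneg hq0).symm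
  exact_mod_cast goalz

lemma window_periodize_eq_take (a : List A) (ha : a ≠ []) (l : ℤ) (m : ℕ) :
    ∃ (i : ℕ) (u v : List A), 0 < i ∧ u ++ v = rep i a ∧ v ++ u ≠ [] ∧
      m ≤ (v ++ u).length ∧
      window (periodize a ha) l m = (v ++ u).take m := by
  have hn : 0 < a.length := len_pos ha
  set i : ℕ := m + 1 with hi
  have hipos : 0 < i := by omega
  have hrlen : (rep i a).length = i * a.length := rep_length i a
  have hilen : m < i * a.length := by
    calc m < m + 1 := by omega
    _ ≤ (m + 1) * a.length := Nat.le_mul_of_pos_right _ hn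
  have haile : a.length ≤ i * a.length := Nat.le_mul_of_pos_left _ hipos
  obtain ⟨he0, he1⟩ := emod_bounds (i := l) (n := a.length) hn
  set r : ℕ := (l % (a.length : ℤ)).toNat with hrdef
  have hrsmall : r < a.length := by omega
  refine ⟨i, (rep i a).take r, (rep i a).drop r, hipos, List.take_append_drop r _, ?_, ?_, ?_⟩
  · apply List.ne_nil_of_length_pos
    rw [List.length_append, List.length_drop, List.length_take]
    omega
  · rw [List.length_append, List.length_drop, List.length_take]
    omega
  · have hulen : ((rep i a).take r).length = r := by
      rw [List.length_take]
      have : r < a.length := by omega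
      omega
    have hvu : (rep i a).drop r ++ (rep i a).take r ≠ [] := by
      apply List.ne_nil_of_length_pos
      rw [List.length_append, List.length_drop, List.length_take]
      omega
    have hvulen : ((rep i a).drop r ++ (rep i a).take r).length = i * a.length := by
      rw [List.length_append, List.length_drop, List.length_take]
      omega
    have hrot := periodize_rotate ha hipos (List.take_append_drop r (rep i a)) hvu
    refine List.ext_getElem ?_ fun j hj hj' => ?_
    · rw [window_length, List.length_take, hvulen]
      omega
    · rw [window_length] at hj
      rw [window_getElem _ _ _ j hj, List.getElem_take]
      have hlj : periodize a ha (l + (j : ℕ)) = periodize a ha (((j : ℕ) : ℤ) + r) := by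
        apply periodize_congr
        have hl : l % (a.length : ℤ) = ((r : ℕ) : ℤ) % a.length := by
          rw [hrdef, Int.toNat_of_nonneg he0, Int.emod_emod_of_dvd _ dvd_rfl]
        rw [Int.add_emod l, Int.add_emod ((j : ℕ) : ℤ), hl]
        ring_nf
      have hrot' : periodize ((rep i a).drop r ++ (rep i a).take r) hvu ((j : ℕ) : ℤ) =
          periodize a ha (((j : ℕ) : ℤ) + r) := by
        rw [hrot, hulen]
      rw [hlj, ← hrot']
      rw [periodize_of_lt _ hvu (by positivity)
        (by rw [hvulen]; exact_mod_cast Nat.lt_trans hj hilen)]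
      congr 1 <;> simp

lemma periodize_window_of_periodic {p : ℤ → A} {k : ℕ} (hk : 0 < k)
    (hp : ∀ i : ℤ, p (i + (k : ℤ)) = p i) (l : ℤ) (c : ℕ) (hc : 0 < c)
    (hw : window p l (c * k) ≠ []) (i : ℤ) :
    periodize (window p l (c * k)) hw i = p (l + i) := by
  have hck : 0 < c * k := Nat.mul_pos hc hk
  have hlen : (window p l (c * k)).length = c * k := window_length _ _ _
  obtain ⟨h0, h1⟩ := emod_bounds (i := i) (n := (window p l (c * k)).length)
    (by rw [hlen]; exact hck)
  rw [periodize_eq_getElem]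
  have hidx : (i % (((window p l (c * k)).length : ℕ) : ℤ)).toNat < c * k := by omega
  rw [window_getElem _ _ _ _ hidx]
  apply periodic_emod (p := (k : ℤ)) (by exact_mod_cast hk) hp
  rw [Int.toNat_of_nonneg h0]
  have hdvd : ((k : ℤ)) ∣ (((window p l (c * k)).length : ℕ) : ℤ) := by
    rw [hlen]; push_cast; exact ⟨c, by ring⟩
  rw [Int.add_emod l, Int.add_emod l i, Int.emod_emod_of_dvd _ hdvd]

lemma segment_of_infix_periodize {b w : List A} (hw : w ≠ []) (h : b <:+: w) :
    IsSegment b (periodize w hw) := by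
  obtain ⟨x, y, hxy⟩ := h
  refine ⟨(x.length : ℤ), fun j => ?_⟩
  have hj : (j : ℕ) < b.length := j.isLt
  have hwl : w.length = x.length + b.length + y.length := by
    rw [← hxy]; simp only [List.length_append]
  have hlt : ((x.length : ℤ) + (j : ℕ)) < w.length := by push_cast; omega
  rw [periodize_of_lt w hw (by positivity) hlt]
  have hidx : ((x.length : ℤ) + ((j : ℕ) : ℤ)).toNat = x.length + (j : ℕ) := by omega
  have : w[((x.length : ℤ) + ((j : ℕ) : ℤ)).toNat]'(by omega) =
      w[x.length + (j : ℕ)]'(by omega) := by congr 1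
  rw [this]
  have hxj : x.length + (j : ℕ) < (x ++ b).length := by simp only [List.length_append]; omega
  have e1 : w[x.length + (j : ℕ)]'(by omega) =
      (x ++ b ++ y)[x.length + (j : ℕ)]'(by rw [hxy]; omega) := by
    congr 1
    exact hxy.symm
  rw [e1, List.getElem_append_left (by simpa using hxj),
      List.getElem_append_right (by omega)]
  simp [List.get_eq_getElem]

lemma shft_injective : Function.Injective (shft (α := A)) := by
  intro g h hgh
  funext i
  have := congrFun hgh (i - 1)
  simpa [shft] using this

lemma mem_shiftZ {S : Set (ℤ → A)} (hS : shft '' S = S) (k : ℤ) {t : ℤ → A}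
    (ht : t ∈ S) : (fun i => t (i + k)) ∈ S := by
  induction k using Int.induction_on with
  | zero => simpa using ht
  | succ k ih =>
    have : (fun i => t (i + ((k : ℤ) + 1))) = shft (fun i => t (i + k)) := by
      funext i; simp only [shft]; ring_nf
    rw [this, ← hS]
    exact ⟨_, ih, rfl⟩
  | pred k ih =>
    have hmem : shft (fun i => t (i + (-(k : ℤ) - 1))) ∈ S := by
      have : shft (fun i => t (i + (-(k : ℤ) - 1))) = fun i => t (i + -(k : ℤ)) := by
        funext i; simp only [shft]; ring_nf
      rw [this]; exact ih
    rw [← hS] at hmem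
    obtain ⟨g, hgS, hg⟩ := hmem
    have : g = fun i => t (i + (-(k : ℤ) - 1)) := shft_injective hg
    rwa [← this]

lemma isSegment_of_infix {b w : List A} {s : ℤ → A} (h : b <:+: w)
    (hw : IsSegment w s) : IsSegment b s := by
  obtain ⟨x, y, hxy⟩ := h
  obtain ⟨l, hl⟩ := hw
  refine ⟨l + x.length, fun j => ?_⟩
  have hj : x.length + (j : ℕ) < w.length := by
    rw [← hxy]
    simp only [List.length_append]
    have := j.isLt
    omega
  have := hl ⟨x.length + (j : ℕ), hj⟩
  simp only [List.get_eq_getElem] at this ⊢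
  have e : l + (x.length : ℤ) + ((j : ℕ) : ℤ) = l + ((x.length + (j : ℕ) : ℕ) : ℤ) := by
    push_cast; ring
  rw [e, this]
  have e2 : w[x.length + (j : ℕ)]'hj = (x ++ b ++ y)[x.length + (j : ℕ)]'(by rw [hxy]; exact hj) := by
    congr 1; exact hxy.symm
  rw [e2, List.getElem_append_left (by simp only [List.length_append]; have := j.isLt; omega),
      List.getElem_append_right (by omega)]
  congr 1
  omega

lemma isSegment_shift {a : List A} {t : ℤ → A} (k : ℤ) (h : IsSegment a t) :
    IsSegment a (fun i => t (i + k)) := by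
  obtain ⟨l, hl⟩ := h
  refine ⟨l - k, fun j => ?_⟩
  show t (l - k + ((j : ℕ) : ℤ) + k) = a.get j
  have e : l - k + ((j : ℕ) : ℤ) + k = l + ((j : ℕ) : ℤ) := by ring
  rw [e]
  exact hl j

variable [Fintype A] [Nonempty A] [TopologicalSpace A] [DiscreteTopology A]

lemma cyl_open {m : ℕ} (pos : Fin m → ℤ) (c : Fin m → A) :
    IsOpen {t : ℤ → A | ∀ j, t (pos j) = c j} := by
  have : {t : ℤ → A | ∀ j, t (pos j) = c j} =
      ⋂ j, (fun t : ℤ → A => t (pos j)) ⁻¹' {c j} := by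
    ext t; simp
  rw [this]
  exact isOpen_iInter_of_finite fun j =>
    (continuous_apply _).isOpen_preimage _ (isOpen_discrete _)

lemma adh_closed (L : Set (List A)) : IsClosed (Adh L) := by
  rw [← isOpen_compl_iff, isOpen_iff_forall_mem_open]
  intro s hs
  rw [Set.mem_compl_iff, Adh, Set.mem_setOf_eq] at hs
  push_neg at hs
  obtain ⟨a, hseg, hna⟩ := hs
  obtain ⟨l, hl⟩ := hseg
  refine ⟨{t | ∀ j : Fin a.length, t (l + (j : ℕ)) = a.get j}, ?_, ?_, hl⟩
  · intro t ht hcon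
    obtain ⟨w, hwL, hinf⟩ := hcon a ⟨l, ht⟩
    exact hna w hwL hinf
  · exact cyl_open _ _

lemma adh_shift_eq (L : Set (List A)) : shft '' Adh L = Adh L := by
  ext s
  constructor
  · rintro ⟨t, ht, rfl⟩
    intro a ha
    have : shft t = fun i => t (i + 1) := rfl
    rw [this] at ha
    have : IsSegment a t := by
      obtain ⟨l, hl⟩ := ha
      exact ⟨l + 1, fun j => by simpa [add_right_comm] using hl j⟩
    exact ht a this
  · intro hs
    refine ⟨fun i => s (i - 1), ?_, ?_⟩
    · intro a ha
      have : IsSegment a s := by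
        obtain ⟨l, hl⟩ := ha
        exact ⟨l - 1, fun j => by simpa [sub_add_eq_add_sub] using hl j⟩
      exact hs a this
    · funext i; simp [shft]

lemma mem_closure_of_windows {T : Set (ℤ → A)} {s : ℤ → A}
    (h : ∀ n : ℕ, ∃ t ∈ T, ∀ i : ℤ, -(n : ℤ) ≤ i → i ≤ n → t i = s i) :
    s ∈ closure T := by
  rw [mem_closure_iff]
  intro U hU hsU
  obtain ⟨I, u, hI, hIU⟩ := isOpen_pi_iff.mp hU s hsU
  set n := I.sup (fun i => i.natAbs) with hn
  obtain ⟨t, htT, hagree⟩ := h n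
  refine ⟨t, hIU ?_, htT⟩
  intro i hi
  simp only [Finset.coe_sort_coe, Finset.mem_coe] at hi
  have hle : i.natAbs ≤ n := Finset.le_sup hi
  rw [hagree i (by omega) (by omega)]
  exact (hI i hi).2

lemma mem_of_windows_in {S : Set (ℤ → A)} (hcl : IsClosed S) (hsh : shft '' S = S)
    {s : ℤ → A} (h : ∀ n : ℕ, ∃ t ∈ S, IsSegment (window s (-(n : ℤ)) (2 * n + 1)) t) :
    s ∈ S := by
  rw [← hcl.closure_eq]
  apply mem_closure_of_windows
  intro n
  obtain ⟨t, htS, l, hl⟩ := h n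
  refine ⟨fun i => t (i + (l + n)), mem_shiftZ hsh _ htS, ?_⟩
  intro i hi1 hi2
  have hfin : (i + (n : ℤ)).toNat < (window s (-(n : ℤ)) (2 * n + 1)).length := by
    rw [window_length]; omega
  have h1 := hl ⟨(i + (n : ℤ)).toNat, hfin⟩
  simp only [List.get_eq_getElem] at h1
  have e : l + (((i + (n : ℤ)).toNat : ℕ) : ℤ) = i + (l + n) := by omega
  rw [e] at h1
  show t (i + (l + (n : ℤ))) = s i
  rw [h1, window_getElem s (-(n : ℤ)) (2 * n + 1) (i + (n : ℤ)).toNat (by omega)]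
  congr 1
  omega

lemma part1 {S : Set (ℤ → A)} (hS : IsSubshift S) :
    Ctr (lang S) = lang S ∧ Adh (lang S) = S := by
  obtain ⟨hcl, hsh⟩ := hS
  constructor
  · ext a
    constructor
    · intro ha
      obtain ⟨x, y, hx, hy, hxy⟩ := ha 1 one_pos
      obtain ⟨s, hsS, hseg⟩ := hxy
      exact ⟨s, hsS, isSegment_of_infix ⟨x, y, rfl⟩ hseg⟩
    · rintro ⟨s, hsS, hseg⟩
      obtain ⟨l, ha⟩ := isSegment_iff.mp hseg
      intro N hN
      refine ⟨window s (l - N) N, window s (l + a.length) N, by simp, by simp,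
        s, hsS, ?_⟩
      have e : window s (l - N) N ++ a ++ window s (l + a.length) N =
          window s (l - N) (N + (a.length + N)) := by
        rw [window_add, window_add]
        have e1 : l - N + (N : ℤ) = l := by ring
        rw [e1, ← ha, List.append_assoc]
      rw [e]
      exact isSegment_window _ _ _
  · ext s
    constructor
    · intro hs
      apply mem_of_windows_in hcl hsh
      intro n
      obtain ⟨w, ⟨t, htS, hsegw⟩, hinf⟩ := hs _ (isSegment_window s (-(n : ℤ)) (2 * n + 1))
      exact ⟨t, htS, isSegment_of_infix hinf hsegw⟩
    · intro hsS a hseg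
      exact ⟨a, ⟨s, hsS, hseg⟩, List.infix_rfl⟩

lemma part2 {L : Set (List A)} (hL : Ctr L = L) :
    IsSubshift (Adh L) ∧ lang (Adh L) = L := by
  have hfac : ∀ b w, w ∈ L → b <:+: w → b ∈ L := by
    intro b w hw hbw
    rw [← hL]
    obtain ⟨p, q, hpq⟩ := hbw
    intro N hN
    have hw' : w ∈ Ctr L := by rw [hL]; exact hw
    obtain ⟨x, y, hx, hy, hxyw⟩ := hw' N hN
    refine ⟨x ++ p, q ++ y, by simp only [List.length_append]; omega,
      by simp only [List.length_append]; omega, ?_⟩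
    have e : x ++ p ++ b ++ (q ++ y) = x ++ (p ++ b ++ q) ++ y := by
      simp [List.append_assoc]
    rw [e, hpq]
    exact hxyw
  refine ⟨⟨adh_closed L, adh_shift_eq L⟩, ?_⟩
  ext a
  constructor
  · rintro ⟨s, hsAdh, hseg⟩
    rw [← hL]
    obtain ⟨l, ha⟩ := isSegment_iff.mp hseg
    intro N hN
    obtain ⟨w, hwL, hinf⟩ := hsAdh (window s (l - N) (N + (a.length + N)))
      (isSegment_window _ _ _)
    obtain ⟨p, q, hpq⟩ := hinf
    refine ⟨p ++ window s (l - N) N, window s (l + a.length) N ++ q,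
      by simp only [List.length_append, window_length]; omega,
      by simp only [List.length_append, window_length]; omega, ?_⟩
    have e : p ++ window s (l - N) N ++ a ++ (window s (l + a.length) N ++ q) =
        p ++ (window s (l - N) N ++ a ++ window s (l + a.length) N) ++ q := by
      simp [List.append_assoc]
    rw [e]
    have e2 : window s (l - N) N ++ a ++ window s (l + a.length) N =
        window s (l - N) (N + (a.length + N)) := by
      rw [window_add, window_add]
      have e1 : l - N + (N : ℤ) = l := by ring
      rw [e1, ← ha, List.append_assoc]
    rw [e2, hpq]
    exact hwL
  · intro haL
    classical
    set C : ℕ → Set (ℤ → A) := fun N =>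
      {s | window s (-(N : ℤ)) (N + (a.length + N)) ∈ L ∧ window s 0 a.length = a}
      with hC
    have hclosed : ∀ N, IsClosed (C N) := by
      intro N
      have hCeq : C N = ((fun s (j : Fin (N + (a.length + N))) => s (-(N : ℤ) + (j : ℕ))) ⁻¹'
            {g | List.ofFn g ∈ L}) ∩
          ((fun s (j : Fin a.length) => s ((0 : ℤ) + (j : ℕ))) ⁻¹' {g | List.ofFn g = a}) := rfl
      rw [hCeq]
      exact IsClosed.inter
        (IsClosed.preimage (continuous_pi fun j => continuous_apply _) (isClosed_discrete _))
        (IsClosed.preimage (continuous_pi fun j => continuous_apply _) (isClosed_discrete _))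
    have hdec : ∀ N, C (N + 1) ⊆ C N := by
      rintro N s ⟨h1, h2⟩
      refine ⟨hfac _ _ h1 (window_infix (by push_cast; omega) (by push_cast; omega)), h2⟩
    have hne : ∀ N, (C N).Nonempty := by
      intro N
      have ha' : a ∈ Ctr L := by rw [hL]; exact haL
      obtain ⟨x, y, hx, hy, hxy⟩ := ha' (N + 1) (Nat.succ_pos N)
      have hwlen : (x ++ a ++ y).length = x.length + a.length + y.length := by
        simp only [List.length_append]
      set s0 : ℤ → A := fun i =>
        if h : 0 ≤ i + x.length ∧ i + x.length < ((x ++ a ++ y).length : ℤ)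
        then (x ++ a ++ y)[(i + x.length).toNat]'(by omega)
        else Classical.arbitrary A with hs0
      have hw0 : window s0 (-(x.length : ℤ)) (x ++ a ++ y).length = x ++ a ++ y := by
        refine List.ext_getElem (by simp) fun j hj hj' => ?_
        rw [window_getElem _ _ _ j (by simpa using hj)]
        have hcond : 0 ≤ -(x.length : ℤ) + j + x.length ∧
            -(x.length : ℤ) + j + x.length < ((x ++ a ++ y).length : ℤ) := by
          constructor <;> push_cast <;> omega
        have hval : s0 (-(x.length : ℤ) + j) =
            (x ++ a ++ y)[((-(x.length : ℤ) + j) + x.length).toNat]'(by omega) :=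
          dif_pos hcond
        rw [hval]
        congr 1
        omega
      refine ⟨s0, ?_, ?_⟩
      · apply hfac _ _ hxy
        rw [← hw0]
        apply window_infix
        · push_cast; omega
        · push_cast; omega
      · refine List.ext_getElem (by simp) fun j hj hj' => ?_
        rw [window_getElem _ _ _ j (by simpa using hj)]
        have hcond : 0 ≤ (0 : ℤ) + j + x.length ∧
            (0 : ℤ) + j + x.length < ((x ++ a ++ y).length : ℤ) := by
          constructor <;> push_cast <;> omega
        have hval : s0 ((0 : ℤ) + j) =
            (x ++ a ++ y)[(((0 : ℤ) + j) + x.length).toNat]'(by omega) :=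
          dif_pos hcond
        rw [hval]
        have hidx : ((0 : ℤ) + j + x.length).toNat = x.length + j := by omega
        have e : (x ++ a ++ y)[((0 : ℤ) + j + x.length).toNat]'(by omega) =
            (x ++ a ++ y)[x.length + j]'(by omega) := by congr 1
        rw [e, List.getElem_append_left (by simp only [List.length_append]; omega),
            List.getElem_append_right (by omega)]
        congr 1
        omega
    obtain ⟨s, hsInter⟩ := IsCompact.nonempty_iInter_of_sequence_nonempty_isCompact_isClosed
      C hdec hne ((hclosed 0).isCompact) hclosed
    have hs : ∀ N, s ∈ C N := fun N => Set.mem_iInter.mp hsInter N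
    refine ⟨s, ?_, ?_⟩
    · intro b hsegb
      obtain ⟨l, hb⟩ := isSegment_iff.mp hsegb
      set N : ℕ := l.natAbs + b.length with hN
      refine ⟨window s (-(N : ℤ)) (N + (a.length + N)), (hs N).1, ?_⟩
      rw [hb]
      apply window_infix
      · omega
      · push_cast; omega
    · rw [isSegment_iff]
      exact ⟨0, ((hs 0).2).symm⟩

lemma mem_Lc {S : Set (ℤ → A)} {a : List A} :
    a ∈ Lc S ↔ (∃ ha : a ≠ [], periodize a ha ∈ PerSet S) ∨ a = [] := Iff.rfl

lemma mem_Cc {L : Set (List A)} {a : List A} :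
    a ∈ Cc L ↔ (a = [] ∨ (a ≠ [] ∧ ∀ i : ℕ, 0 < i → ∀ u v : List A,
      u ++ v = List.flatten (List.replicate i a) →
      ∃ x y : List A, x ++ (v ++ u) ++ y ∈ L)) := Iff.rfl

lemma mem_PerSet {S : Set (ℤ → A)} {s : ℤ → A} :
    s ∈ PerSet S ↔ s ∈ S ∧ ∃ n : ℕ, 0 < n ∧ ∀ i : ℤ, s (i + (n : ℤ)) = s i := Iff.rfl

lemma vu_ne_nil {a u v : List A} (hne : a ≠ []) {i : ℕ} (hi : 0 < i)
    (huv : u ++ v = List.flatten (List.replicate i a)) : v ++ u ≠ [] := by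
  apply List.ne_nil_of_length_pos
  have h1 : u.length + v.length = i * a.length := by
    rw [← List.length_append, huv]; exact rep_length i a
  have h2 := Nat.mul_pos hi (len_pos hne)
  simp only [List.length_append]
  omega

lemma part3 {S : Set (ℤ → A)} (hS : IsCyclicSubshift S) :
    Cc (Lc S) = Lc S ∧ Adh (Lc S) = S := by
  obtain ⟨⟨hcl, hsh⟩, hcyc⟩ := hS
  constructor
  · apply Set.Subset.antisymm
    · intro a ha
      rcases mem_Cc.mp ha with h | ⟨hne, hCc⟩
      · exact mem_Lc.mpr (Or.inr h)
      refine mem_Lc.mpr (Or.inl ⟨hne, ?_, a.length, len_pos hne, periodize_period a hne⟩)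
      apply mem_of_windows_in hcl hsh
      intro n
      obtain ⟨i, u, v, hi, huv, hvu, hmle, hwin⟩ :=
        window_periodize_eq_take a hne (-(n : ℤ)) (2 * n + 1)
      obtain ⟨x, y, hxy⟩ := hCc i hi u v huv
      have hwne : x ++ (v ++ u) ++ y ≠ [] := by
        intro h
        rcases List.append_eq_nil_iff.mp h with ⟨h1, -⟩
        rcases List.append_eq_nil_iff.mp h1 with ⟨-, h2⟩
        exact hvu h2
      rcases mem_Lc.mp hxy with ⟨hwne', hper⟩ | hnil
      · refine ⟨periodize _ hwne', hper.1, ?_⟩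
        rw [hwin]
        exact segment_of_infix_periodize hwne'
          (((List.take_prefix _ _).isInfix).trans ⟨x, y, rfl⟩)
      · exact absurd hnil hwne
    · intro a ha
      rcases mem_Lc.mp ha with ⟨hne, hper⟩ | h
      · refine mem_Cc.mpr (Or.inr ⟨hne, ?_⟩)
        intro i hi u v huv
        refine ⟨[], [], ?_⟩
        have hvu : v ++ u ≠ [] := vu_ne_nil hne hi huv
        have hrot := periodize_rotate hne hi huv hvu
        have hshift : (fun m => periodize a hne (m + u.length)) ∈ S :=
          mem_shiftZ hsh _ hper.1
        have heq : periodize (v ++ u) hvu = fun m => periodize a hne (m + u.length) :=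
          funext hrot
        have hsimp : ([] : List A) ++ (v ++ u) ++ [] = v ++ u := by simp
        rw [hsimp]
        refine mem_Lc.mpr (Or.inl ⟨hvu, ?_, (v ++ u).length, len_pos hvu,
          periodize_period _ _⟩)
        rw [heq]
        exact hshift
      · exact mem_Cc.mpr (Or.inl h)
  · apply Set.Subset.antisymm
    · intro s hs
      apply mem_of_windows_in hcl hsh
      intro n
      obtain ⟨w, hwLc, hinf⟩ := hs _ (isSegment_window s (-(n : ℤ)) (2 * n + 1))
      have hbne : window s (-(n : ℤ)) (2 * n + 1) ≠ [] := by
        apply List.ne_nil_of_length_pos; rw [window_length]; omega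
      rcases mem_Lc.mp hwLc with ⟨hwne, hper⟩ | hnil
      · exact ⟨periodize w hwne, hper.1, segment_of_infix_periodize hwne hinf⟩
      · rw [hnil] at hinf
        exact absurd (List.eq_nil_of_infix_nil hinf) hbne
    · intro s hsS b hseg
      obtain ⟨l, hb⟩ := isSegment_iff.mp hseg
      rcases Nat.eq_zero_or_pos b.length with hm | hm
      · refine ⟨[], mem_Lc.mpr (Or.inr rfl), ?_⟩
        rw [List.eq_nil_of_length_eq_zero hm]
      · have hscl : s ∈ closure (PerSet S) := hcyc hsS
        set m := b.length with hmdef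
        have hUopen : IsOpen {t : ℤ → A | ∀ j : Fin m, t (l + (j : ℕ)) = s (l + (j : ℕ))} :=
          cyl_open _ _
        obtain ⟨p, hpU, hpPer⟩ := (mem_closure_iff.mp hscl) _ hUopen (fun j => rfl)
        obtain ⟨hpS, k, hk, hpk⟩ := mem_PerSet.mp hpPer
        have hwlen : 0 < (m + 1) * k := Nat.mul_pos (Nat.succ_pos m) hk
        have hwne : window p l ((m + 1) * k) ≠ [] := by
          apply List.ne_nil_of_length_pos; rw [window_length]; exact hwlen
        have hperiodize := periodize_window_of_periodic hk hpk l (m + 1) (Nat.succ_pos m) hwne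
        refine ⟨window p l ((m + 1) * k), ?_, ?_⟩
        · refine mem_Lc.mpr (Or.inl ⟨hwne, ?_, (window p l ((m + 1) * k)).length,
            len_pos hwne, periodize_period _ _⟩)
          have heq : periodize (window p l ((m + 1) * k)) hwne = fun i => p (l + i) :=
            funext hperiodize
          have hmem : (fun i => p (i + l)) ∈ S := mem_shiftZ hsh l hpS
          have hcomm : (fun i : ℤ => p (l + i)) = (fun i => p (i + l)) := by
            funext i; rw [add_comm]
          rw [heq, hcomm]
          exact hmem
        · have hbp : b = window p l m := by
            rw [hb]
            refine List.ext_getElem (by simp) fun j hj hj' => ?_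
            rw [window_getElem _ _ _ j (by simpa using hj),
                window_getElem _ _ _ j (by simpa using hj)]
            exact (hpU ⟨j, by simpa using hj⟩).symm
          have hsplit : window p l ((m + 1) * k) =
              window p l m ++ window p (l + m) ((m + 1) * k - m) := by
            rw [← window_add]
            congr 1
            have h1 : m + 1 ≤ (m + 1) * k := Nat.le_mul_of_pos_right _ hk
            omega
          rw [hbp, hsplit]
          exact ⟨[], window p (l + m) ((m + 1) * k - m), by simp⟩

lemma part4 {L : Set (List A)} (hL : Cc L = L) :
    IsCyclicSubshift (Adh L) ∧ Lc (Adh L) = L := by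
  have hKL : ∀ w, w ∈ L → ∀ hw : w ≠ [], periodize w hw ∈ Adh L := by
    intro w hwL hw b hseg
    obtain ⟨l, hb⟩ := isSegment_iff.mp hseg
    obtain ⟨i, u, v, hi, huv, hvu, hmle, hwin⟩ :=
      window_periodize_eq_take w hw l b.length
    have hwCc : w ∈ Cc L := by rw [hL]; exact hwL
    rcases mem_Cc.mp hwCc with h0 | ⟨-, h⟩
    · exact absurd h0 hw
    obtain ⟨x, y, hxy⟩ := h i hi u v huv
    refine ⟨x ++ (v ++ u) ++ y, hxy, ?_⟩
    rw [hb, hwin]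
    exact ((List.take_prefix _ _).isInfix).trans ⟨x, y, rfl⟩
  constructor
  · refine ⟨⟨adh_closed L, adh_shift_eq L⟩, ?_⟩
    intro s hs
    apply mem_closure_of_windows
    intro n
    have hbne : window s (-(n : ℤ)) (2 * n + 1) ≠ [] := by
      apply List.ne_nil_of_length_pos; rw [window_length]; omega
    obtain ⟨w, hwL, hinf⟩ := hs _ (isSegment_window s (-(n : ℤ)) (2 * n + 1))
    obtain ⟨x, y, hxy⟩ := hinf
    have hw : w ≠ [] := by
      intro h
      rw [h] at hxy
      rcases List.append_eq_nil_iff.mp hxy with ⟨h1, -⟩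
      rcases List.append_eq_nil_iff.mp h1 with ⟨-, h2⟩
      exact hbne h2
    have hwl : w.length = x.length + (2 * n + 1) + y.length := by
      rw [← hxy]; simp only [List.length_append, window_length]
    refine ⟨fun i => periodize w hw (i + ((x.length : ℤ) + n)), ⟨?_, w.length,
      len_pos hw, ?_⟩, ?_⟩
    · exact mem_shiftZ (adh_shift_eq L) _ (hKL w hwL hw)
    · intro i
      show periodize w hw (i + (w.length : ℤ) + ((x.length : ℤ) + n)) =
        periodize w hw (i + ((x.length : ℤ) + n))
      have e : i + (w.length : ℤ) + ((x.length : ℤ) + n) =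
          (i + ((x.length : ℤ) + n)) + w.length := by ring
      rw [e, periodize_period]
    · intro i hi1 hi2
      show periodize w hw (i + ((x.length : ℤ) + n)) = s i
      have hwz : (w.length : ℤ) = (x.length : ℤ) + (2 * n + 1) + y.length := by
        exact_mod_cast hwl
      have h0 : 0 ≤ i + ((x.length : ℤ) + n) := by omega
      have h1 : i + ((x.length : ℤ) + n) < w.length := by omega
      rw [periodize_of_lt w hw h0 h1]
      have e : w[(i + ((x.length : ℤ) + n)).toNat]'(by omega) =
          (x ++ window s (-(n : ℤ)) (2 * n + 1) ++ y)[(i + ((x.length : ℤ) + n)).toNat]'(by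
            rw [hxy]; omega) := by
        congr 1; exact hxy.symm
      rw [e, List.getElem_append_left (by
            simp only [List.length_append, window_length]; omega),
          List.getElem_append_right (by omega)]
      rw [window_getElem s (-(n : ℤ)) (2 * n + 1)
        ((i + ((x.length : ℤ) + n)).toNat - x.length) (by omega)]
      congr 1
      omega
  · apply Set.Subset.antisymm
    · intro a ha
      rcases mem_Lc.mp ha with ⟨hne, hper⟩ | h
      · rw [← hL]
        refine mem_Cc.mpr (Or.inr ⟨hne, ?_⟩)
        intro i hi u v huv
        have hvu : v ++ u ≠ [] := vu_ne_nil hne hi huv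
        have hrot := periodize_rotate hne hi huv hvu
        have hseg : IsSegment (v ++ u) (periodize a hne) := by
          refine ⟨(u.length : ℤ), fun j => ?_⟩
          have hjlt : ((j : ℕ) : ℤ) < ((v ++ u).length : ℤ) := by
            exact_mod_cast j.isLt
          have h1 := periodize_of_lt (v ++ u) hvu (i := ((j : ℕ) : ℤ))
            (by positivity) hjlt
          have h2 := hrot ((j : ℕ) : ℤ)
          rw [h1] at h2
          have e : (u.length : ℤ) + ((j : ℕ) : ℤ) = ((j : ℕ) : ℤ) + u.length := by ring
          rw [e, ← h2, List.get_eq_getElem]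
          congr 1
        obtain ⟨w, hwL, hinf⟩ := hper.1 (v ++ u) hseg
        obtain ⟨x, y, hxy⟩ := hinf
        exact ⟨x, y, by rw [hxy]; exact hwL⟩
      · rw [← hL]
        exact mem_Cc.mpr (Or.inl h)
    · intro a haL
      rcases eq_or_ne a [] with h | hne
      · exact mem_Lc.mpr (Or.inr h)
      · exact mem_Lc.mpr (Or.inl ⟨hne, hKL a haL hne, a.length, len_pos hne,
          periodize_period a hne⟩)

end Scratch

/-- `(L, Adh)` is a bijective correspondence between central
languages (`C(L) = L`) and subshifts, and `(L_c, Adh)` is a bijective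
correspondence between cyclic languages (`C_c(L) = L`) and cyclic subshifts. -/
theorem stmt_16 (A : Type) [Fintype A] [Nonempty A] [TopologicalSpace A]
    [DiscreteTopology A] :
    (∀ S : Set (ℤ → A), IsSubshift S →
      Ctr (lang S) = lang S ∧ Adh (lang S) = S) ∧
    (∀ L : Set (List A), Ctr L = L →
      IsSubshift (Adh L) ∧ lang (Adh L) = L) ∧
    (∀ S : Set (ℤ → A), IsCyclicSubshift S →
      Cc (Lc S) = Lc S ∧ Adh (Lc S) = S) ∧
    (∀ L : Set (List A), Cc L = L →
      IsCyclicSubshift (Adh L) ∧ Lc (Adh L) = L) :=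
  ⟨fun _ hS => Scratch.part1 hS, fun _ hL => Scratch.part2 hL,
   fun _ hS => Scratch.part3 hS, fun _ hL => Scratch.part4 hL⟩
end
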